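/- arXiv:1511.01075 — 5 statements merged into one kernel-verified Lean document; each statement's English description precedes it below -/
import Mathlib

section
/- Let 𝔽 be an infinite field of characteristic p with 0 < p ≤ n and p ≠ 2, and let d ≥ 1. Then the invariant tr(X₁⁺ X₂⁺ ⋯ X_d⁺) is indecomposable in the algebra R₊^{O(n)} of invariants of symmetric matrices; that is, tr(X₁⁺⋯X_d⁺) does not lie in the 𝔽-span of products g·h with g, h ∈ R₊^{O(n)} homogeneous of positive degree. -/
open Matrix
noncomputable section

/-- The polynomial ring `R = 𝔽[x_{ij}(k)]` in `n² d` variables. -/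
abbrev Rpoly (𝔽 : Type) [Field 𝔽] (n d : ℕ) : Type :=
  MvPolynomial (Fin n × Fin n × Fin d) 𝔽

/-- The generic matrix `X_k` with `(X_k)_{ij} = x_{ij}(k)`. -/
def Xgen (𝔽 : Type) [Field 𝔽] (n d : ℕ) (k : Fin d) :
    Matrix (Fin n) (Fin n) (Rpoly 𝔽 n d) :=
  fun i j => MvPolynomial.X (i, j, k)

/-- The symmetric generic matrix `X_k⁺`. -/
def XgenSym (𝔽 : Type) [Field 𝔽] (n d : ℕ) (k : Fin d) :
    Matrix (Fin n) (Fin n) (Rpoly 𝔽 n d) :=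
  fun i j => if j ≤ i then MvPolynomial.X (i, j, k) else MvPolynomial.X (j, i, k)

/-- The skew-symmetric generic matrix `X_k⁻`. -/
def XgenSkew (𝔽 : Type) [Field 𝔽] (n d : ℕ) (k : Fin d) :
    Matrix (Fin n) (Fin n) (Rpoly 𝔽 n d) :=
  fun i j =>
    if j < i then MvPolynomial.X (i, j, k)
    else if i < j then - MvPolynomial.X (j, i, k)
    else 0

/-- `σ_t(A)`, the `t`-th coefficient of the characteristic polynomial of `A`
(so `σ₁ = tr`, `σ_n = det`). -/
def sigmaCoeff {𝔽 : Type} [Field 𝔽] {n d : ℕ} (t : ℕ)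
    (A : Matrix (Fin n) (Fin n) (Rpoly 𝔽 n d)) : Rpoly 𝔽 n d :=
  (-1) ^ t * A.charpoly.coeff (n - t)

/-- The algebra `R^{O(n)}` of matrix `O(n)`-invariants: generated by all `σ_t(A)`,
`1 ≤ t ≤ n`, where `A` is a nonempty product of generic and transposed generic matrices. -/
def invO (𝔽 : Type) [Field 𝔽] (n d : ℕ) : Subalgebra 𝔽 (Rpoly 𝔽 n d) :=
  Algebra.adjoin 𝔽
    {f | ∃ t, 1 ≤ t ∧ t ≤ n ∧
      ∃ w : List (Matrix (Fin n) (Fin n) (Rpoly 𝔽 n d)), w ≠ [] ∧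
        (∀ m ∈ w, (∃ k, m = Xgen 𝔽 n d k) ∨ (∃ k, m = (Xgen 𝔽 n d k)ᵀ)) ∧
        f = sigmaCoeff t w.prod}

/-- The algebra `R₊^{O(n)}`, generated by all `σ_t(A)` for `A` a nonempty product of
symmetric generic matrices. -/
def invOplus (𝔽 : Type) [Field 𝔽] (n d : ℕ) : Subalgebra 𝔽 (Rpoly 𝔽 n d) :=
  Algebra.adjoin 𝔽
    {f | ∃ t, 1 ≤ t ∧ t ≤ n ∧
      ∃ w : List (Matrix (Fin n) (Fin n) (Rpoly 𝔽 n d)), w ≠ [] ∧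
        (∀ m ∈ w, ∃ k, m = XgenSym 𝔽 n d k) ∧
        f = sigmaCoeff t w.prod}

/-- The algebra `R₋^{O(n)}`, generated by all `σ_t(A)` for `A` a nonempty product of
skew-symmetric generic matrices. -/
def invOminus (𝔽 : Type) [Field 𝔽] (n d : ℕ) : Subalgebra 𝔽 (Rpoly 𝔽 n d) :=
  Algebra.adjoin 𝔽
    {f | ∃ t, 1 ≤ t ∧ t ≤ n ∧
      ∃ w : List (Matrix (Fin n) (Fin n) (Rpoly 𝔽 n d)), w ≠ [] ∧
        (∀ m ∈ w, ∃ k, m = XgenSkew 𝔽 n d k) ∧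
        f = sigmaCoeff t w.prod}

/-- `f` is decomposable in the subalgebra `A`: it lies in the `𝔽`-span of products `g·h`
with `g, h ∈ A` homogeneous of positive degree. -/
def Decomposable (𝔽 : Type) [Field 𝔽] {n d : ℕ} (A : Subalgebra 𝔽 (Rpoly 𝔽 n d))
    (f : Rpoly 𝔽 n d) : Prop :=
  f ∈ Submodule.span 𝔽
    {x : Rpoly 𝔽 n d | ∃ g ∈ A, ∃ h ∈ A,
      (∃ i, 0 < i ∧ MvPolynomial.IsHomogeneous g i) ∧
      (∃ j, 0 < j ∧ MvPolynomial.IsHomogeneous h j) ∧ x = g * h}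



section AuxIndecomp
section charpolyScale
open Polynomial

lemma eval_charpoly' {R : Type*} [CommRing R] {n : ℕ} (M : Matrix (Fin n) (Fin n) R) (x : R) :
    M.charpoly.eval x = (x • (1 : Matrix (Fin n) (Fin n) R) - M).det := by
  rw [Matrix.charpoly, ← Polynomial.coe_evalRingHom, RingHom.map_det]
  congr 1
  ext i j
  by_cases h : i = j
  · subst h; simp [charmatrix_apply_eq, Matrix.smul_apply, Matrix.one_apply]
  · simp [charmatrix_apply_ne _ _ _ h, Matrix.smul_apply, Matrix.one_apply, h]

lemma charpoly_smul_coeff_field {K : Type*} [Field K] [Infinite K] {n : ℕ}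
    (c : K) (hc : c ≠ 0) (A : Matrix (Fin n) (Fin n) K) (i : ℕ) :
    (c • A).charpoly.coeff i = c ^ (n - i) * A.charpoly.coeff i := by
  have hdeg : A.charpoly.natDegree = n := by
    simpa using Matrix.charpoly_natDegree_eq_dim A
  have key : (c • A).charpoly
      = ∑ j ∈ Finset.range (n + 1), Polynomial.C (c ^ (n - j) * A.charpoly.coeff j) * Polynomial.X ^ j := by
    apply Polynomial.funext
    intro x
    rw [eval_charpoly']
    have h1 : x • (1 : Matrix (Fin n) (Fin n) K) - c • A
        = c • ((c⁻¹ * x) • (1 : Matrix (Fin n) (Fin n) K) - A) := by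
      rw [smul_sub, smul_smul]
      field_simp
    rw [h1, Matrix.det_smul, ← eval_charpoly']
    rw [Polynomial.eval_eq_sum_range' (n := n+1) (by omega)]
    rw [Polynomial.eval_finset_sum]
    rw [Finset.mul_sum]
    apply Finset.sum_congr rfl
    intro j hj
    rw [Finset.mem_range, Nat.lt_succ_iff] at hj
    simp only [Polynomial.eval_mul, Polynomial.eval_C, Polynomial.eval_pow, Polynomial.eval_X,
      Fintype.card_fin]
    rw [mul_pow, inv_pow]
    have hcj : (c ^ j) ≠ 0 := pow_ne_zero _ hc
    field_simp
    rw [← pow_sub_mul_pow c hj]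
    ring
  rw [key]
  rw [Polynomial.finset_sum_coeff]
  by_cases hi : i ≤ n
  · rw [Finset.sum_eq_single i]
    · rw [Polynomial.coeff_C_mul,
        Polynomial.coeff_X_pow, if_pos rfl, mul_one]
    · intro b _ hbi
      rw [Polynomial.coeff_C_mul,
        Polynomial.coeff_X_pow, if_neg (Ne.symm hbi), mul_zero]
    · intro h
      exact absurd (Finset.mem_range.2 (by omega)) h
  · push_neg at hi
    have h0 : A.charpoly.coeff i = 0 :=
      Polynomial.coeff_eq_zero_of_natDegree_lt (by omega)
    rw [h0, mul_zero]
    apply Finset.sum_eq_zero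
    intro b hb
    rw [Finset.mem_range] at hb
    have hbi : b ≠ i := by omega
    rw [Polynomial.coeff_C_mul,
      Polynomial.coeff_X_pow, if_neg (Ne.symm hbi), mul_zero]

lemma charpoly_smul_coeff {R : Type*} [CommRing R] [IsDomain R] [Infinite R] {n : ℕ}
    (c : R) (hc : c ≠ 0) (A : Matrix (Fin n) (Fin n) R) (i : ℕ) :
    (c • A).charpoly.coeff i = c ^ (n - i) * A.charpoly.coeff i := by
  let K := FractionRing R
  let f : R →+* K := algebraMap R K
  have hf : Function.Injective f := IsFractionRing.injective R K
  have hK : Infinite K := Infinite.of_injective f hf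
  apply hf
  have h1 : f ((c • A).charpoly.coeff i) = ((c • A).map f).charpoly.coeff i := by
    rw [Matrix.charpoly_map, Polynomial.coeff_map]
  have h2 : (c • A).map f = f c • (A.map f) := by
    ext i j
    simp [Matrix.map_apply, Matrix.smul_apply]
  have h3 : f (A.charpoly.coeff i) = (A.map f).charpoly.coeff i := by
    rw [Matrix.charpoly_map, Polynomial.coeff_map]
  rw [_root_.map_mul, map_pow, h1, h2, h3,
    charpoly_smul_coeff_field (f c) ((map_ne_zero_iff f hf).mpr hc) (A.map f) i]

end charpolyScale

open MvPolynomial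

abbrev Tring (𝔽 : Type) [Field 𝔽] (d : ℕ) : Type := MvPolynomial (Option (Fin d)) 𝔽

variable (𝔽 : Type) [Field 𝔽] (p n d : ℕ)

/-- diagonal entries of the base matrices (over 𝔽[y]) -/
def dvec (c : ℕ) : Fin n → Polynomial 𝔽 :=
  fun i => if (i : ℕ) = 0 then (1 + Polynomial.X) ^ c else if (i : ℕ) < p then 1 else 0

def DDm (c : ℕ) : Matrix (Fin n) (Fin n) (Polynomial 𝔽) :=
  Matrix.diagonal (dvec 𝔽 p n c)

def Phir : Polynomial 𝔽 →+* Tring 𝔽 d :=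
  (Polynomial.aeval (MvPolynomial.X none : Tring 𝔽 d)).toRingHom

def cnt (k : Fin d) : ℕ := if (k : ℕ) = 0 then 1 else 0

def MT (k : Fin d) : Matrix (Fin n) (Fin n) (Tring 𝔽 d) :=
  (DDm 𝔽 p n (cnt d k)).map (Phir 𝔽 d)

lemma DDm_mul (a b : ℕ) : DDm 𝔽 p n a * DDm 𝔽 p n b = DDm 𝔽 p n (a + b) := by
  unfold DDm
  rw [Matrix.diagonal_mul_diagonal]
  apply congrArg Matrix.diagonal
  funext i
  unfold dvec
  by_cases h0 : (i : ℕ) = 0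
  · simp [h0, pow_add]
  · by_cases hp : (i : ℕ) < p <;> simp [h0, hp]

lemma MT_symm (k : Fin d) (i j : Fin n) : MT 𝔽 p n d k i j = MT 𝔽 p n d k j i := by
  unfold MT DDm
  by_cases h : i = j
  · subst h; rfl
  · simp [Matrix.map_apply, Matrix.diagonal_apply_ne _ h,
      Matrix.diagonal_apply_ne _ (Ne.symm h)]

def psiH : Rpoly 𝔽 n d →ₐ[𝔽] Tring 𝔽 d :=
  MvPolynomial.aeval (fun v : Fin n × Fin n × Fin d =>
    MvPolynomial.X (some v.2.2) * MT 𝔽 p n d v.2.2 v.1 v.2.1)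

lemma psi_XgenSym (k : Fin d) :
    (psiH 𝔽 p n d).mapMatrix (XgenSym 𝔽 n d k)
      = (MvPolynomial.X (some k) : Tring 𝔽 d) • MT 𝔽 p n d k := by
  ext i j
  simp only [AlgHom.mapMatrix_apply, Matrix.map_apply, Matrix.smul_apply]
  unfold XgenSym
  by_cases h : j ≤ i
  · rw [if_pos h]
    simp [psiH, smul_eq_mul]
  · rw [if_neg h]
    simp only [psiH, aeval_X]
    rw [MT_symm]
    simp [smul_eq_mul]

def muF (ks : List (Fin d)) : Option (Fin d) →₀ ℕ :=
  (ks.map fun k => Finsupp.single (some k) 1).sum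

lemma muF_apply (ks : List (Fin d)) (o : Option (Fin d)) :
    muF d ks o = (ks.map fun k => if some k = o then (1:ℕ) else 0).sum := by
  unfold muF
  rw [← Finsupp.applyAddHom_apply, map_list_sum, List.map_map]
  congr 1
  apply List.map_congr_left
  intro k _
  simp [Finsupp.single_apply]

lemma muF_none (ks : List (Fin d)) : muF d ks none = 0 := by
  rw [muF_apply]
  simp

lemma muF_head (k : Fin d) (t : List (Fin d)) : 1 ≤ muF d (k :: t) (some k) := by
  rw [muF_apply]
  simp only [List.map_cons, List.sum_cons, if_pos rfl]
  exact Nat.le_add_right 1 _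

lemma prod_X_eq_monomial (ks : List (Fin d)) :
    ((ks.map fun k => (MvPolynomial.X (some k) : Tring 𝔽 d)).prod)
      = MvPolynomial.monomial (muF d ks) (1 : 𝔽) := by
  induction ks with
  | nil => simp [muF, monomial_zero', MvPolynomial.C_1]
  | cons k t ih =>
    simp only [List.map_cons, List.prod_cons, ih]
    rw [MvPolynomial.X, MvPolynomial.monomial_mul, one_mul]
    congr 1

lemma prod_image (ks : List (Fin d)) (h : ks ≠ []) :
    ((ks.map fun k => (MvPolynomial.X (some k) : Tring 𝔽 d) • MT 𝔽 p n d k)).prod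
      = ((ks.map fun k => (MvPolynomial.X (some k) : Tring 𝔽 d)).prod)
        • ((DDm 𝔽 p n ((ks.map (cnt d)).sum)).map (Phir 𝔽 d)) := by
  induction ks with
  | nil => exact absurd rfl h
  | cons k t ih =>
    cases t with
    | nil => simp [MT]
    | cons k' t' =>
      rw [List.map_cons, List.prod_cons, ih (by simp)]
      rw [smul_mul_smul_comm]
      simp only [List.map_cons, List.prod_cons, List.sum_cons]
      congr 1
      show MT 𝔽 p n d k * _ = _
      unfold MT
      rw [← Matrix.map_mul, DDm_mul]

lemma coeff_Phir (q : Polynomial 𝔽) (b : Option (Fin d) →₀ ℕ) (hb : b none = 0) :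
    MvPolynomial.coeff b (Phir 𝔽 d q) = if b = 0 then q.coeff 0 else 0 := by
  induction q using Polynomial.induction_on' with
  | add f g hf hg =>
    rw [map_add, MvPolynomial.coeff_add, hf, hg, Polynomial.coeff_add]
    split_ifs <;> simp
  | monomial e a =>
    have : Phir 𝔽 d (Polynomial.monomial e a) = MvPolynomial.C a * (MvPolynomial.X none) ^ e := by
      simp [Phir, Polynomial.aeval_monomial]
    rw [this, MvPolynomial.coeff_C_mul, MvPolynomial.X_pow_eq_monomial,
      MvPolynomial.coeff_monomial]
    by_cases he : e = 0
    · subst he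
      simp only [Finsupp.single_zero]
      by_cases hb0 : b = 0
      · simp [hb0, eq_comm]
      · simp [hb0, Ne.symm hb0, eq_comm]
    · have hne : Finsupp.single (none : Option (Fin d)) e ≠ b := by
        intro hEq
        apply he
        rw [← hEq] at hb
        simpa using hb
      rw [if_neg hne]
      simp [he, Polynomial.coeff_monomial]

lemma trace_DDm (hp0 : 0 < p) (hpn : p ≤ n) (c : ℕ) :
    Matrix.trace (DDm 𝔽 p n c)
      = (p : Polynomial 𝔽) + ((1 + Polynomial.X) ^ c - 1) := by
  have hn0 : 0 < n := lt_of_lt_of_le hp0 hpn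
  unfold DDm
  rw [Matrix.trace_diagonal]
  have hsplit : ∀ i : Fin n, dvec 𝔽 p n c i
      = (if (i : ℕ) < p then (1 : Polynomial 𝔽) else 0)
        + (if i = (⟨0, hn0⟩ : Fin n) then (1 + Polynomial.X) ^ c - 1 else 0) := by
    intro i
    unfold dvec
    by_cases h0 : (i : ℕ) = 0
    · have : i = (⟨0, hn0⟩ : Fin n) := by exact Fin.ext h0
      rw [this]
      simp [hp0]
    · have : i ≠ (⟨0, hn0⟩ : Fin n) := by
        intro hEq; exact h0 (by rw [hEq])
      simp [h0, this]
  rw [Finset.sum_congr rfl (fun i _ => hsplit i), Finset.sum_add_distrib]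
  congr 1
  · rw [Fin.sum_univ_eq_sum_range (fun i => if i < p then (1 : Polynomial 𝔽) else 0) n]
    rw [Finset.sum_boole]
    congr 1
    have : (Finset.range n).filter (fun i => i < p) = Finset.range p := by
      ext x
      simp only [Finset.mem_filter, Finset.mem_range]
      omega
    rw [this, Finset.card_range]
  · rw [Finset.sum_ite_eq' Finset.univ (⟨0, hn0⟩ : Fin n)]
    simp


variable [Infinite 𝔽]

instance : Infinite (Tring 𝔽 d) :=
  Infinite.of_injective (MvPolynomial.C : 𝔽 → Tring 𝔽 d) (MvPolynomial.C_injective _ _)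

lemma psi_sigma (τ : ℕ) (hτn : τ ≤ n) (ks : List (Fin d)) (hks : ks ≠ []) :
    psiH 𝔽 p n d ((-1) ^ τ * ((ks.map (XgenSym 𝔽 n d)).prod).charpoly.coeff (n - τ))
      = (-1) ^ τ * MvPolynomial.monomial (τ • muF d ks) (1 : 𝔽)
          * Phir 𝔽 d ((DDm 𝔽 p n ((ks.map (cnt d)).sum)).charpoly.coeff (n - τ)) := by
  rw [_root_.map_mul, map_pow, map_neg, _root_.map_one]
  rw [mul_assoc]
  congr 1
  have h1 : psiH 𝔽 p n d (((ks.map (XgenSym 𝔽 n d)).prod).charpoly.coeff (n - τ))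
      = ((((ks.map (XgenSym 𝔽 n d)).prod).map (psiH 𝔽 p n d).toRingHom).charpoly).coeff (n - τ) := by
    rw [Matrix.charpoly_map, Polynomial.coeff_map]
    rfl
  rw [h1]
  have h2 : ((ks.map (XgenSym 𝔽 n d)).prod).map (psiH 𝔽 p n d).toRingHom
      = (AlgHom.mapMatrix (psiH 𝔽 p n d)) ((ks.map (XgenSym 𝔽 n d)).prod) := rfl
  rw [h2, map_list_prod, List.map_map]
  have h3 : (ks.map ((AlgHom.mapMatrix (psiH 𝔽 p n d)) ∘ XgenSym 𝔽 n d))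
      = ks.map (fun k => (MvPolynomial.X (some k) : Tring 𝔽 d) • MT 𝔽 p n d k) := by
    apply List.map_congr_left
    intro k _
    exact psi_XgenSym 𝔽 p n d k
  rw [h3, prod_image 𝔽 p n d ks hks, prod_X_eq_monomial]
  rw [charpoly_smul_coeff _ (by
      rw [Ne, MvPolynomial.monomial_eq_zero]; exact one_ne_zero) _ _]
  have h4 : n - (n - τ) = τ := by omega
  rw [h4, MvPolynomial.monomial_pow, one_pow]
  congr 1
  rw [Matrix.charpoly_map _ (Phir 𝔽 d), Polynomial.coeff_map]

lemma exists_ks (w : List (Matrix (Fin n) (Fin n) (Rpoly 𝔽 n d)))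
    (hw : ∀ m ∈ w, ∃ k, m = XgenSym 𝔽 n d k) :
    ∃ ks : List (Fin d), w = ks.map (XgenSym 𝔽 n d) := by
  induction w with
  | nil => exact ⟨[], rfl⟩
  | cons m t ih =>
    obtain ⟨k, hk⟩ := hw m List.mem_cons_self
    obtain ⟨ks, hks⟩ := ih (fun m' hm' => hw m' (List.mem_cons_of_mem _ hm'))
    exact ⟨k :: ks, by rw [List.map_cons, ← hk, ← hks]⟩

lemma coeff0_charpoly_DDm (hp0 : 0 < p) (hpn : p ≤ n) (hchar : ((p : ℕ) : 𝔽) = 0) (c : ℕ) :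
    ((DDm 𝔽 p n c).charpoly.coeff (n - 1)).coeff 0 = 0 := by
  have hn0 : 0 < n := lt_of_lt_of_le hp0 hpn
  haveI : Nonempty (Fin n) := ⟨⟨0, hn0⟩⟩
  have h := Matrix.trace_eq_neg_charpoly_coeff (DDm 𝔽 p n c)
  rw [Fintype.card_fin] at h
  have h2 : (DDm 𝔽 p n c).charpoly.coeff (n - 1) = - Matrix.trace (DDm 𝔽 p n c) := by
    rw [h, neg_neg]
  rw [h2, trace_DDm 𝔽 p n hp0 hpn c]
  rw [Polynomial.coeff_neg, Polynomial.coeff_add, Polynomial.coeff_sub]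
  have h3 : ((1 + Polynomial.X : Polynomial 𝔽) ^ c).coeff 0 = 1 := by
    rw [Polynomial.coeff_zero_eq_eval_zero]
    simp
  rw [h3]
  simp [hchar]

set_option maxHeartbeats 1000000 in
lemma F1 (hp0 : 0 < p) (hpn : p ≤ n) (hchar : ((p : ℕ) : 𝔽) = 0)
    {g : Rpoly 𝔽 n d}
    (hg : g ∈ invOplus 𝔽 n d) :
    ∀ a : Option (Fin d) →₀ ℕ, (∀ o, a o ≤ 1) → a none = 0 → a ≠ 0 →
      MvPolynomial.coeff a (psiH 𝔽 p n d g) = 0 := by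
  rw [invOplus] at hg
  induction hg using Algebra.adjoin_induction with
  | mem x hx =>
    obtain ⟨τ, hτ1, hτn, w, hw, hall, rfl⟩ := hx
    obtain ⟨ks, rfl⟩ := exists_ks 𝔽 n d w hall
    have hks : ks ≠ [] := by
      intro hEq
      rw [hEq] at hw
      exact hw rfl
    intro a ha hnone hne
    rw [sigmaCoeff, psi_sigma 𝔽 p n d τ hτn ks hks]
    have hC : ((-1 : Tring 𝔽 d) ^ τ) = MvPolynomial.C ((-1 : 𝔽) ^ τ) := by
      rw [map_pow, map_neg, _root_.map_one]
    rw [mul_assoc, hC, MvPolynomial.coeff_C_mul, MvPolynomial.coeff_monomial_mul']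
    by_cases hle : τ • muF d ks ≤ a
    · rw [if_pos hle]
      have hbnone : (a - τ • muF d ks) none = 0 := by
        rw [Finsupp.tsub_apply]
        omega
      rw [coeff_Phir 𝔽 d _ _ hbnone]
      by_cases hb0 : a - τ • muF d ks = 0
      · rw [if_pos hb0]
        have haeq : a = τ • muF d ks := le_antisymm (tsub_eq_zero_iff_le.mp hb0) hle
        -- show τ = 1
        obtain ⟨k, t, rfl⟩ : ∃ k t, ks = k :: t := by
          cases ks with
          | nil => exact absurd rfl hks
          | cons k t => exact ⟨k, t, rfl⟩
        have hμ : 1 ≤ muF d (k :: t) (some k) := muF_head d k t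
        have hτa : τ ≤ a (some k) := by
          rw [haeq, Finsupp.smul_apply, smul_eq_mul]
          exact Nat.le_mul_of_pos_right τ hμ
        have hτ : τ = 1 := le_antisymm (le_trans hτa (ha (some k))) hτ1
        rw [hτ, coeff0_charpoly_DDm 𝔽 p n hp0 hpn hchar]
        ring
      · rw [if_neg hb0]
        ring
    · rw [if_neg hle]
      ring
  | algebraMap r =>
    intro a _ _ hne
    rw [AlgHom.commutes]
    have : (algebraMap 𝔽 (Tring 𝔽 d)) r = MvPolynomial.C r := rfl
    rw [this, MvPolynomial.coeff_C, if_neg (fun h => hne (by rw [← h]))]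
  | add x y hx hy px py =>
    intro a ha hnone hne
    rw [map_add, MvPolynomial.coeff_add, px a ha hnone hne, py a ha hnone hne, add_zero]
  | mul x y hx hy px py =>
    intro a ha hnone hne
    rw [_root_.map_mul, MvPolynomial.coeff_mul]
    apply Finset.sum_eq_zero
    rintro ⟨a₁, a₂⟩ hmem
    have hmem : a₁ + a₂ = a := Finset.HasAntidiagonal.mem_antidiagonal.mp hmem
    by_cases h1 : a₁ = 0
    · have h2 : a₂ = a := by rw [← hmem, h1, zero_add]
      rw [h2, py a ha hnone hne, mul_zero]
    · have hb : ∀ o, a₁ o ≤ a o := by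
        intro o
        have : a₁ o + a₂ o = a o := by
          rw [← hmem]; rfl
        omega
      rw [px a₁ (fun o => le_trans (hb o) (ha o))
        (Nat.le_zero.mp (le_trans (hb none) (le_of_eq hnone))) h1, zero_mul]

lemma constCoeff_psi (g : Rpoly 𝔽 n d) :
    MvPolynomial.constantCoeff (psiH 𝔽 p n d g) = MvPolynomial.constantCoeff g := by
  have hcomp : (MvPolynomial.constantCoeff : Tring 𝔽 d →+* 𝔽).comp (psiH 𝔽 p n d).toRingHom
      = (MvPolynomial.constantCoeff : Rpoly 𝔽 n d →+* 𝔽) := by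
    apply MvPolynomial.ringHom_ext
    · intro r
      simp [psiH]
    · intro v
      simp [psiH]
  calc MvPolynomial.constantCoeff (psiH 𝔽 p n d g)
      = ((MvPolynomial.constantCoeff : Tring 𝔽 d →+* 𝔽).comp (psiH 𝔽 p n d).toRingHom) g := rfl
    _ = MvPolynomial.constantCoeff g := by rw [hcomp]

lemma F0 {g : Rpoly 𝔽 n d} {j : ℕ} (hj : 0 < j) (hg : MvPolynomial.IsHomogeneous g j) :
    MvPolynomial.coeff 0 (psiH 𝔽 p n d g) = 0 := by
  have h1 : MvPolynomial.coeff 0 (psiH 𝔽 p n d g)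
      = MvPolynomial.constantCoeff (psiH 𝔽 p n d g) := by
    rw [MvPolynomial.constantCoeff_eq]
  rw [h1, constCoeff_psi, MvPolynomial.constantCoeff_eq]
  exact hg.coeff_eq_zero (by simp [Finsupp.degree]; omega)

def uF : Option (Fin d) →₀ ℕ := muF d (List.finRange d) + Finsupp.single none 1

lemma muF_finRange (hd : 1 ≤ d) (k : Fin d) : muF d (List.finRange d) (some k) = 1 := by
  rw [muF_apply]
  rw [← Fin.sum_univ_def]
  have : ∀ k' : Fin d, (if some k' = some k then (1:ℕ) else 0)
      = (if k' = k then (1:ℕ) else 0) := by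
    intro k'; simp
  rw [Finset.sum_congr rfl (fun k' _ => this k')]
  rw [Finset.sum_ite_eq' Finset.univ k (fun _ => 1)]
  simp

lemma uF_apply (hd : 1 ≤ d) (o : Option (Fin d)) : uF d o = 1 := by
  unfold uF
  rw [Finsupp.add_apply]
  cases o with
  | none => rw [muF_none]; simp
  | some k => rw [muF_finRange d hd k]; simp

lemma cnt_sum (hd : 1 ≤ d) : ((List.finRange d).map (cnt d)).sum = 1 := by
  rw [← Fin.sum_univ_def]
  unfold cnt
  have : ∀ k : Fin d, (if (k : ℕ) = 0 then (1:ℕ) else 0)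
      = (if k = (⟨0, hd⟩ : Fin d) then (1:ℕ) else 0) := by
    intro k
    congr 1
    simp [Fin.ext_iff]
  rw [Finset.sum_congr rfl (fun k _ => this k)]
  rw [Finset.sum_ite_eq' Finset.univ (⟨0, hd⟩ : Fin d) (fun _ => 1)]
  simp

lemma trace_map' {R S : Type*} [CommRing R] [CommRing S] (f : R →+* S)
    (A : Matrix (Fin n) (Fin n) R) : Matrix.trace (A.map f) = f (Matrix.trace A) := by
  simp [Matrix.trace, Matrix.diag, Matrix.map_apply]

lemma psi_trace (hp0 : 0 < p) (hpn : p ≤ n) (hchar : ((p : ℕ) : 𝔽) = 0) (hd : 1 ≤ d) :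
    psiH 𝔽 p n d (Matrix.trace (List.ofFn (fun k : Fin d => XgenSym 𝔽 n d k)).prod)
      = MvPolynomial.monomial (uF d) (1 : 𝔽) := by
  have htr : ∀ A : Matrix (Fin n) (Fin n) (Rpoly 𝔽 n d),
      psiH 𝔽 p n d (Matrix.trace A) = Matrix.trace ((AlgHom.mapMatrix (psiH 𝔽 p n d)) A) := by
    intro A
    simp [Matrix.trace, Matrix.diag, map_sum]
  rw [htr, List.ofFn_eq_map, map_list_prod, List.map_map]
  have hks : (List.finRange d) ≠ [] := by
    intro hEq
    have : (List.finRange d).length = d := List.length_finRange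
    rw [hEq] at this
    simp at this
    omega
  have h3 : ((List.finRange d).map ((AlgHom.mapMatrix (psiH 𝔽 p n d)) ∘ XgenSym 𝔽 n d))
      = (List.finRange d).map (fun k => (MvPolynomial.X (some k) : Tring 𝔽 d) • MT 𝔽 p n d k) := by
    apply List.map_congr_left
    intro k _
    exact psi_XgenSym 𝔽 p n d k
  rw [h3, prod_image 𝔽 p n d _ hks, cnt_sum d hd, Matrix.trace_smul,
    _root_.trace_map', trace_DDm 𝔽 p n hp0 hpn 1]
  have h4 : ((p : Polynomial 𝔽) + ((1 + Polynomial.X) ^ 1 - 1)) = Polynomial.X := by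
    rw [← Polynomial.C_eq_natCast, hchar]
    simp
  rw [h4]
  have h5 : Phir 𝔽 d Polynomial.X = MvPolynomial.X none := by
    simp [Phir]
  rw [h5, prod_X_eq_monomial, smul_eq_mul]
  rw [MvPolynomial.X, MvPolynomial.monomial_mul, mul_one]
  rfl


end AuxIndecomp

theorem trace_prod_sym_indecomposable
    (𝔽 : Type) [Field 𝔽] [Infinite 𝔽] (n d : ℕ) (hn : 2 ≤ n) (hd : 1 ≤ d)
    (hp0 : 0 < ringChar 𝔽) (hpn : ringChar 𝔽 ≤ n) (hp2 : ringChar 𝔽 ≠ 2) :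
    ¬ Decomposable 𝔽 (invOplus 𝔽 n d)
      (Matrix.trace (List.ofFn (fun k : Fin d => XgenSym 𝔽 n d k)).prod) := by
  intro hdec
  rw [Decomposable] at hdec
  set p := ringChar 𝔽 with hpdef
  haveI : CharP 𝔽 p := ringChar.charP 𝔽
  have hchar : ((p : ℕ) : 𝔽) = 0 := CharP.cast_eq_zero 𝔽 p
  have hpn' : p ≤ n := hpn
  have hp0' : 0 < p := hp0
  set L : Rpoly 𝔽 n d →ₗ[𝔽] 𝔽 :=
    { toFun := fun f => MvPolynomial.coeff (uF d) (psiH 𝔽 p n d f)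
      map_add' := by
        intro x y
        show MvPolynomial.coeff _ (psiH 𝔽 p n d (x + y)) = _
        rw [map_add, MvPolynomial.coeff_add]
      map_smul' := by
        intro c x
        show MvPolynomial.coeff _ (psiH 𝔽 p n d (c • x)) = _
        rw [_root_.map_smul, MvPolynomial.coeff_smul]
        rfl } with hL
  have hkill : ∀ x ∈ {x : Rpoly 𝔽 n d | ∃ g ∈ invOplus 𝔽 n d, ∃ h ∈ invOplus 𝔽 n d,
      (∃ i, 0 < i ∧ MvPolynomial.IsHomogeneous g i) ∧
      (∃ j, 0 < j ∧ MvPolynomial.IsHomogeneous h j) ∧ x = g * h},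
      x ∈ LinearMap.ker L := by
    rintro x ⟨g, hg, h, hh, ⟨i, hi0, hgi⟩, ⟨j, hj0, hhj⟩, rfl⟩
    rw [LinearMap.mem_ker]
    show MvPolynomial.coeff (uF d) (psiH 𝔽 p n d (g * h)) = 0
    rw [_root_.map_mul, MvPolynomial.coeff_mul]
    apply Finset.sum_eq_zero
    rintro ⟨a, b⟩ hmem
    have hmem : a + b = uF d := Finset.HasAntidiagonal.mem_antidiagonal.mp hmem
    have hsum : ∀ o, a o + b o = 1 := by
      intro o
      have h1 : (a + b) o = uF d o := by rw [hmem]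
      rw [Finsupp.add_apply, uF_apply d hd o] at h1
      exact h1
    by_cases hbnone : b none = 0
    · by_cases hb0 : b = 0
      · rw [hb0]
        rw [F0 𝔽 p n d hj0 hhj, mul_zero]
      · rw [F1 𝔽 p n d hp0' hpn' hchar hh b
          (fun o => by have := hsum o; omega) hbnone hb0, mul_zero]
    · have hanone : a none = 0 := by have := hsum none; omega
      by_cases ha0 : a = 0
      · rw [ha0]
        rw [F0 𝔽 p n d hi0 hgi, zero_mul]
      · rw [F1 𝔽 p n d hp0' hpn' hchar hg a
          (fun o => by have := hsum o; omega) hanone ha0, zero_mul]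
  have hle := Submodule.span_le.mpr hkill
  have hker := hle hdec
  rw [LinearMap.mem_ker] at hker
  have hval : L (Matrix.trace (List.ofFn (fun k : Fin d => XgenSym 𝔽 n d k)).prod) = 1 := by
    show MvPolynomial.coeff (uF d) (psiH 𝔽 p n d _) = 1
    rw [psi_trace 𝔽 p n d hp0' hpn' hchar hd, MvPolynomial.coeff_monomial, if_pos rfl]
  rw [hker] at hval
  exact zero_ne_one hval

end
end

section
/- Let 𝔽 be an infinite field of characteristic p with 0 < p ≤ n and p ≠ 2, and let d ≥ 1. Suppose coefficients α_{σ,δ} ∈ 𝔽 are given for each permutation σ ∈ S_d and each tuple δ = (δ₁,…,δ_d) ∈ {1,T}^d, and suppose that the linear combination Σ_{σ,δ} α_{σ,δ} · tr(X_{σ(1)}^{δ₁} ⋯ X_{σ(d)}^{δ_d}) is decomposable in R^{O(n)} (i.e., lies in the 𝔽-span of products g·h with g, h ∈ R^{O(n)} homogeneous of positive degree). Then the sum of all coefficients is zero: Σ_{σ,δ} α_{σ,δ} = 0. -/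
open Matrix
noncomputable section

namespace SumCoeffsAux

open MvPolynomial

variable (𝔽 : Type) [Field 𝔽] (n d : ℕ)

/-- The diagonal entries of the substituted matrices. -/
def dEnt (k : Fin d) (i : Fin n) : 𝔽 :=
  if (i : ℕ) < ringChar 𝔽 then (if (i : ℕ) = 0 ∧ (k : ℕ) = 0 then 2 else 1) else 0

/-- The evaluation homomorphism. -/
def phi : Rpoly 𝔽 n d →ₐ[𝔽] MvPolynomial (Fin d) 𝔽 :=
  MvPolynomial.aeval (fun q : Fin n × Fin n × Fin d =>
    if q.1 = q.2.1 then monomial (Finsupp.single q.2.2 1) (dEnt 𝔽 n d q.2.2 q.1) else 0)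

/-- exponent multiset of a list of indices -/
def cnt (ks : List (Fin d)) : Fin d →₀ ℕ := Multiset.toFinsupp (↑ks : Multiset (Fin d))

/-- diagonal products -/
def rho (ks : List (Fin d)) (i : Fin n) : 𝔽 := (ks.map (fun k => dEnt 𝔽 n d k i)).prod

variable {𝔽 n d}

lemma cnt_nil : cnt d ([] : List (Fin d)) = 0 := by
  simp [cnt]

lemma cnt_cons (k : Fin d) (ks : List (Fin d)) :
    cnt d (k :: ks) = Finsupp.single k 1 + cnt d ks := by
  have : ((k :: ks : List (Fin d)) : Multiset (Fin d)) = {k} + (↑ks : Multiset (Fin d)) := by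
    rw [← Multiset.cons_coe, ← Multiset.singleton_add]
  rw [cnt, this, Multiset.toFinsupp_add, Multiset.toFinsupp_singleton, cnt]

lemma cnt_apply (ks : List (Fin d)) (k : Fin d) : cnt d ks k = ks.count k := by
  simp [cnt, Multiset.toFinsupp_apply]

lemma map_Xgen (k : Fin d) :
    (Xgen 𝔽 n d k).map (phi 𝔽 n d) =
      Matrix.diagonal (fun i => monomial (Finsupp.single k 1) (dEnt 𝔽 n d k i)) := by
  ext i j
  by_cases h : i = j
  · subst h; simp [Matrix.map_apply, Xgen, phi, Matrix.diagonal_apply_eq]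
  · simp [Matrix.map_apply, Xgen, phi, Matrix.diagonal_apply_ne _ h, h]

lemma map_XgenT (k : Fin d) :
    ((Xgen 𝔽 n d k)ᵀ).map (phi 𝔽 n d) =
      Matrix.diagonal (fun i => monomial (Finsupp.single k 1) (dEnt 𝔽 n d k i)) := by
  ext i j
  by_cases h : i = j
  · subst h; simp [Matrix.map_apply, Xgen, phi, Matrix.diagonal_apply_eq, Matrix.transpose_apply]
  · have h' : j ≠ i := fun hji => h hji.symm
    simp [Matrix.map_apply, Xgen, phi, Matrix.diagonal_apply_ne _ h, Matrix.transpose_apply, h']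

lemma map_mul_phi (A B : Matrix (Fin n) (Fin n) (Rpoly 𝔽 n d)) :
    (A * B).map (phi 𝔽 n d) = A.map (phi 𝔽 n d) * B.map (phi 𝔽 n d) := by
  simpa using Matrix.map_mul (L := A) (M := B) (f := (phi 𝔽 n d).toRingHom)

/-- relation between a list of indices and a list of (possibly transposed) generic matrices -/
def Rel (k : Fin d) (m : Matrix (Fin n) (Fin n) (Rpoly 𝔽 n d)) : Prop :=
  m = Xgen 𝔽 n d k ∨ m = (Xgen 𝔽 n d k)ᵀ

lemma map_prod {ks : List (Fin d)} {w : List (Matrix (Fin n) (Fin n) (Rpoly 𝔽 n d))}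
    (h : List.Forall₂ Rel ks w) :
    (w.prod).map (phi 𝔽 n d) =
      Matrix.diagonal (fun i => monomial (cnt d ks) (rho 𝔽 n d ks i)) := by
  induction h with
  | nil =>
      simp only [List.prod_nil, cnt_nil, rho, List.map_nil]
      rw [Matrix.map_one _ (map_zero _) (map_one _)]
      simp [MvPolynomial.monomial_zero']
  | @cons k m ks' w' hk hw ih =>
      rw [List.prod_cons, map_mul_phi]
      have hm : m.map (phi 𝔽 n d) =
          Matrix.diagonal (fun i => monomial (Finsupp.single k 1) (dEnt 𝔽 n d k i)) := by
        rcases hk with rfl | rfl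
        · exact map_Xgen k
        · exact map_XgenT k
      rw [hm, ih, Matrix.diagonal_mul_diagonal]
      have heq : (fun i => (monomial (Finsupp.single k 1)) (dEnt 𝔽 n d k i) *
            (monomial (cnt d ks')) (rho 𝔽 n d ks' i)) =
          fun i => (monomial (cnt d (k :: ks'))) (rho 𝔽 n d (k :: ks') i) := by
        funext i
        rw [monomial_mul, cnt_cons]
        simp [rho]
      rw [heq]

end SumCoeffsAux

namespace SumCoeffsAux

open MvPolynomial

variable {𝔽 : Type} [Field 𝔽] {n d : ℕ}

lemma charpoly_diagonal {R : Type*} [CommRing R] {m : ℕ} (v : Fin m → R) :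
    (Matrix.diagonal v).charpoly = ∏ i, (Polynomial.X - Polynomial.C (v i)) := by
  have hc : Matrix.charmatrix (Matrix.diagonal v) =
      Matrix.diagonal (fun i => Polynomial.X - Polynomial.C (v i)) := by
    apply Matrix.ext
    intro i j
    by_cases h : i = j
    · subst h
      rw [Matrix.charmatrix_apply_eq, Matrix.diagonal_apply_eq, Matrix.diagonal_apply_eq]
    · rw [Matrix.charmatrix_apply_ne _ _ _ h, Matrix.diagonal_apply_ne _ h,
        Matrix.diagonal_apply_ne _ h, map_zero, neg_zero]
  rw [Matrix.charpoly, hc, Matrix.det_diagonal]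

lemma esymm_monomial (N : Fin d →₀ ℕ) (t : ℕ) (s₀ : Multiset 𝔽) :
    (s₀.map (fun x : 𝔽 => (monomial N x : MvPolynomial (Fin d) 𝔽))).esymm t
      = monomial (t • N) (s₀.esymm t) := by
  have hprod : ∀ u : Multiset 𝔽,
      (u.map (fun x : 𝔽 => (monomial N x : MvPolynomial (Fin d) 𝔽))).prod
        = monomial (Multiset.card u • N) u.prod := by
    intro u
    induction u using Multiset.induction with
    | empty => simp [monomial_zero']
    | cons a u ih =>
        rw [Multiset.map_cons, Multiset.prod_cons, ih, monomial_mul, Multiset.prod_cons,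
          Multiset.card_cons]
        congr 1
        rw [add_comm (Multiset.card u) 1, add_smul, one_smul]
  rw [Multiset.esymm, Multiset.esymm, Multiset.powersetCard_map, Multiset.map_map]
  have hmc : ((s₀.powersetCard t).map
        ((fun l : Multiset (MvPolynomial (Fin d) 𝔽) => l.prod) ∘
          (fun u : Multiset 𝔽 => u.map (fun x : 𝔽 => (monomial N x : MvPolynomial (Fin d) 𝔽)))))
      = (s₀.powersetCard t).map
          (fun u : Multiset 𝔽 => (monomial (t • N)) u.prod) := by
    apply Multiset.map_congr rfl
    intro u hu
    have hcard : Multiset.card u = t := (Multiset.mem_powersetCard.mp hu).2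
    simp only [Function.comp_apply, hprod u, hcard]
  rw [hmc]
  have : ((s₀.powersetCard t).map (fun u : Multiset 𝔽 => (monomial (t • N)) u.prod))
      = ((s₀.powersetCard t).map Multiset.prod).map (monomial (t • N)) := by
    rw [Multiset.map_map]; rfl
  rw [this, ← map_multiset_sum]

lemma phi_sigma (t : ℕ) (htn : t ≤ n) {ks : List (Fin d)}
    {w : List (Matrix (Fin n) (Fin n) (Rpoly 𝔽 n d))} (h : List.Forall₂ Rel ks w) :
    phi 𝔽 n d (sigmaCoeff t w.prod) =
      monomial (t • cnt d ks)
        ((Finset.univ.val.map (fun i : Fin n => rho 𝔽 n d ks i)).esymm t) := by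
  have hcoeff : phi 𝔽 n d (w.prod.charpoly.coeff (n - t)) =
      ((w.prod.map (phi 𝔽 n d)).charpoly).coeff (n - t) := by
    have h1 := Matrix.charpoly_map w.prod (phi 𝔽 n d).toRingHom
    have h2 : (w.prod.map (phi 𝔽 n d)).charpoly
        = w.prod.charpoly.map (phi 𝔽 n d).toRingHom := by simpa using h1
    rw [h2, Polynomial.coeff_map]
    rfl
  have hσ : phi 𝔽 n d (sigmaCoeff t w.prod) =
      (-1 : MvPolynomial (Fin d) 𝔽) ^ t * ((w.prod.map (phi 𝔽 n d)).charpoly).coeff (n - t) := by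
    rw [sigmaCoeff, _root_.map_mul, map_pow, map_neg, _root_.map_one, hcoeff]
  rw [hσ, map_prod h, charpoly_diagonal]
  rw [Finset.prod_eq_multiset_prod]
  have hmm : (Finset.univ.val.map
        (fun i : Fin n => Polynomial.X - Polynomial.C (monomial (cnt d ks) (rho 𝔽 n d ks i))))
      = ((Finset.univ.val.map (fun i : Fin n => (monomial (cnt d ks)) (rho 𝔽 n d ks i))).map
          (fun z => Polynomial.X - Polynomial.C z)) := by
    rw [Multiset.map_map]; rfl
  rw [hmm]
  have hcard : Multiset.card (Finset.univ.val.map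
      (fun i : Fin n => (monomial (cnt d ks)) (rho 𝔽 n d ks i))) = n := by
    rw [Multiset.card_map]
    simpa using (Finset.card_univ (α := Fin n))
  rw [Multiset.prod_X_sub_C_coeff _ (by rw [hcard]; exact Nat.sub_le n t)]
  rw [hcard, Nat.sub_sub_self htn]
  rw [← mul_assoc, ← mul_pow, neg_mul_neg, one_mul, one_pow, one_mul]
  have : (Finset.univ.val.map (fun i : Fin n => (monomial (cnt d ks)) (rho 𝔽 n d ks i)))
      = ((Finset.univ.val.map (fun i : Fin n => rho 𝔽 n d ks i)).map
          (fun x : 𝔽 => (monomial (cnt d ks) x : MvPolynomial (Fin d) 𝔽))) := by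
    rw [Multiset.map_map]; rfl
  rw [this, esymm_monomial]

end SumCoeffsAux

namespace SumCoeffsAux

open MvPolynomial

variable {𝔽 : Type} [Field 𝔽] {n d : ℕ}

lemma card_filter_lt (hpn : ringChar 𝔽 ≤ n) :
    (Finset.univ.filter (fun i : Fin n => (i : ℕ) < ringChar 𝔽)).card = ringChar 𝔽 := by
  set p := ringChar 𝔽 with hp
  have : (Finset.univ.filter (fun i : Fin n => (i : ℕ) < p))
      = Finset.univ.map (Fin.castLEEmb hpn) := by
    ext i
    simp only [Finset.mem_filter, Finset.mem_univ, true_and, Finset.mem_map]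
    constructor
    · intro hi
      refine ⟨⟨(i : ℕ), hi⟩, ?_⟩
      ext
      simp [Fin.castLEEmb, Fin.castLE]
    · rintro ⟨j, rfl⟩
      simpa [Fin.castLEEmb, Fin.castLE] using j.isLt
  rw [this, Finset.card_map, Finset.card_univ, Fintype.card_fin]

lemma sum_indicator_lt (hpn : ringChar 𝔽 ≤ n) :
    (∑ i : Fin n, (if (i : ℕ) < ringChar 𝔽 then (1 : 𝔽) else 0)) = 0 := by
  rw [Finset.sum_boole, card_filter_lt hpn]
  exact CharP.cast_eq_zero 𝔽 (ringChar 𝔽)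

lemma esymm_one_multiset {R : Type*} [CommSemiring R] (s : Multiset R) :
    s.esymm 1 = s.sum := by
  rw [Multiset.esymm, Multiset.powersetCard_one, Multiset.map_map]
  simp

lemma rho_of_ne_zero (hks : ks ≠ ([] : List (Fin d))) (h0 : ∀ k ∈ ks, (k : ℕ) ≠ 0)
    (i : Fin n) :
    rho 𝔽 n d ks i = if (i : ℕ) < ringChar 𝔽 then 1 else 0 := by
  have hmap : ks.map (fun k => dEnt 𝔽 n d k i)
      = ks.map (fun _ => if (i : ℕ) < ringChar 𝔽 then (1 : 𝔽) else 0) := by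
    apply List.map_congr_left
    intro k hk
    have : ¬((i : ℕ) = 0 ∧ (k : ℕ) = 0) := fun hc => h0 k hk hc.2
    simp only [dEnt, this, if_false]
  rw [rho, hmap, List.map_const', List.prod_replicate]
  rcases Nat.lt_or_ge (i : ℕ) (ringChar 𝔽) with hi | hi
  · simp [hi]
  · have : ¬ ((i : ℕ) < ringChar 𝔽) := Nat.not_lt.mpr hi
    simp only [this, if_false]
    exact zero_pow (fun h => hks (List.eq_nil_of_length_eq_zero h))

lemma e_vanish (hpn : ringChar 𝔽 ≤ n) {ks : List (Fin d)} (hks : ks ≠ [])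
    (h0 : ∀ k ∈ ks, (k : ℕ) ≠ 0) :
    (Finset.univ.val.map (fun i : Fin n => rho 𝔽 n d ks i)).esymm 1 = 0 := by
  rw [esymm_one_multiset]
  have : (Finset.univ.val.map (fun i : Fin n => rho 𝔽 n d ks i)).sum
      = ∑ i : Fin n, rho 𝔽 n d ks i := by
    rw [Finset.sum_eq_multiset_sum]
  rw [this]
  have heq : ∀ i : Fin n, rho 𝔽 n d ks i = if (i : ℕ) < ringChar 𝔽 then 1 else 0 :=
    rho_of_ne_zero hks h0
  rw [Finset.sum_congr rfl (fun i _ => heq i)]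
  exact sum_indicator_lt hpn

end SumCoeffsAux

namespace SumCoeffsAux

open MvPolynomial

variable {𝔽 : Type} [Field 𝔽] {n d : ℕ}

def allOnes (d : ℕ) : Fin d →₀ ℕ := Finsupp.equivFunOnFinite.symm (fun _ => 1)

lemma allOnes_apply (k : Fin d) : allOnes d k = 1 := rfl

lemma forall₂_map {γ : Type*} {β β' : Type*} {R : β → β' → Prop} (l : List γ)
    (f : γ → β) (g : γ → β') (h : ∀ x ∈ l, R (f x) (g x)) :
    List.Forall₂ R (l.map f) (l.map g) := by
  induction l with
  | nil => exact List.Forall₂.nil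
  | cons a l ih =>
      exact List.Forall₂.cons (h a List.mem_cons_self)
        (ih (fun x hx => h x (List.mem_cons_of_mem a hx)))

lemma cnt_ofFn_perm (σ : Equiv.Perm (Fin d)) : cnt d (List.ofFn σ) = allOnes d := by
  ext k
  rw [cnt_apply, allOnes_apply]
  rw [List.ofFn_eq_map]
  have : k = σ (σ.symm k) := (Equiv.apply_symm_apply σ k).symm
  rw [this, List.count_map_of_injective _ σ σ.injective]
  exact List.count_eq_one_of_mem (List.nodup_finRange d) (List.mem_finRange _)

lemma prod_dEnt_all (hd : 1 ≤ d) (hp0 : 0 < ringChar 𝔽) (i : Fin n) :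
    (∏ k : Fin d, dEnt 𝔽 n d k i)
      = (if (i : ℕ) < ringChar 𝔽 then (1 : 𝔽) else 0) + (if (i : ℕ) = 0 then 1 else 0) := by
  by_cases hip : (i : ℕ) < ringChar 𝔽
  · by_cases hi0 : (i : ℕ) = 0
    · have : ∀ k : Fin d, dEnt 𝔽 n d k i = if (k : ℕ) = 0 then 2 else 1 := by
        intro k
        simp [dEnt, hip, hi0, hp0]
      rw [Finset.prod_congr rfl (fun k _ => this k)]
      have h2 : (∏ k : Fin d, if (k : ℕ) = 0 then (2 : 𝔽) else 1)
          = ∏ k : Fin d, (if k = (⟨0, hd⟩ : Fin d) then (2 : 𝔽) else 1) := by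
        apply Finset.prod_congr rfl
        intro k _
        congr 1
        simp [Fin.ext_iff]
      rw [h2, Finset.prod_ite_eq' Finset.univ (⟨0, hd⟩ : Fin d) (fun _ => (2 : 𝔽))]
      simp [hip, hi0, hp0]
      norm_num
    · have : ∀ k : Fin d, dEnt 𝔽 n d k i = 1 := by
        intro k
        simp only [dEnt, hip, if_true, hi0, false_and, if_false]
      rw [Finset.prod_congr rfl (fun k _ => this k), Finset.prod_const_one]
      simp [hip, hi0]
  · have hne : Finset.univ.Nonempty := ⟨(⟨0, hd⟩ : Fin d), Finset.mem_univ _⟩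
    rw [Finset.prod_eq_zero (Finset.mem_univ (⟨0, hd⟩ : Fin d))]
    · have hi0 : ¬ ((i : ℕ) = 0) := by
        intro h0
        exact hip (by rw [h0]; exact hp0)
      simp [hip, hi0]
    · simp [dEnt, hip]

lemma rho_ofFn_sum (hd : 1 ≤ d) (hp0 : 0 < ringChar 𝔽) (hpn : ringChar 𝔽 ≤ n)
    (hn : 1 ≤ n) (σ : Equiv.Perm (Fin d)) :
    (∑ i : Fin n, rho 𝔽 n d (List.ofFn σ) i) = 1 := by
  have hrho : ∀ i : Fin n, rho 𝔽 n d (List.ofFn σ) i = ∏ k : Fin d, dEnt 𝔽 n d k i := by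
    intro i
    rw [rho, List.map_ofFn, List.prod_ofFn]
    exact Equiv.prod_comp σ (fun k => dEnt 𝔽 n d k i)
  rw [Finset.sum_congr rfl (fun i _ => (hrho i).trans (prod_dEnt_all hd hp0 i))]
  rw [Finset.sum_add_distrib, sum_indicator_lt hpn]
  have : (∑ i : Fin n, if (i : ℕ) = 0 then (1 : 𝔽) else 0) = 1 := by
    have h2 : ∀ i : Fin n, (if (i : ℕ) = 0 then (1 : 𝔽) else 0)
        = (if i = (⟨0, hn⟩ : Fin n) then (1 : 𝔽) else 0) := by
      intro i; congr 1; simp [Fin.ext_iff]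
    rw [Finset.sum_congr rfl (fun i _ => h2 i), Finset.sum_ite_eq' Finset.univ]
    simp
  rw [this, zero_add]

end SumCoeffsAux

namespace SumCoeffsAux

open MvPolynomial

variable {𝔽 : Type} [Field 𝔽] {n d : ℕ}

lemma phi_trace (hd : 1 ≤ d) (hn : 1 ≤ n) (hp0 : 0 < ringChar 𝔽) (hpn : ringChar 𝔽 ≤ n)
    (σ : Equiv.Perm (Fin d)) (δ : Fin d → Bool) :
    phi 𝔽 n d (Matrix.trace (List.ofFn (fun i : Fin d =>
        if δ i then (Xgen 𝔽 n d (σ i))ᵀ else Xgen 𝔽 n d (σ i))).prod)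
      = monomial (allOnes d) (1 : 𝔽) := by
  set w : List (Matrix (Fin n) (Fin n) (Rpoly 𝔽 n d)) :=
    List.ofFn (fun i : Fin d => if δ i then (Xgen 𝔽 n d (σ i))ᵀ else Xgen 𝔽 n d (σ i)) with hw
  have hf : List.Forall₂ Rel (List.ofFn (⇑σ)) w := by
    rw [hw, List.ofFn_eq_map, List.ofFn_eq_map]
    apply forall₂_map
    intro x _
    cases hδ : δ x
    · simp only [hδ, if_neg Bool.false_ne_true]
      exact Or.inl rfl
    · simp only [hδ, if_pos rfl]
      exact Or.inr rfl
  have ht : phi 𝔽 n d (Matrix.trace w.prod) = Matrix.trace ((w.prod).map (phi 𝔽 n d)) := by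
    simp [Matrix.trace, Matrix.diag, map_sum, Matrix.map_apply]
  rw [ht, map_prod hf, Matrix.trace_diagonal]
  rw [cnt_ofFn_perm σ]
  rw [← map_sum (monomial (allOnes d)) _ Finset.univ]
  rw [rho_ofFn_sum hd hp0 hpn hn σ]

/-- elements of the image algebra that sit in a single "good" monomial -/
def Good (u : MvPolynomial (Fin d) 𝔽) : Prop :=
  ∃ (N : Fin d →₀ ℕ) (e : 𝔽), N ≠ 0 ∧
    ((∀ k, N k ≤ 1) ∧ (∀ k : Fin d, (k : ℕ) = 0 → N k = 0) → e = 0) ∧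
    u = monomial N e

lemma good_mul {u v : MvPolynomial (Fin d) 𝔽} (hu : Good u) (hv : Good v) : Good (u * v) := by
  obtain ⟨N, e, hN, hvan, rfl⟩ := hu
  obtain ⟨N', e', hN', hvan', rfl⟩ := hv
  refine ⟨N + N', e * e', ?_, ?_, by rw [monomial_mul]⟩
  · intro h
    apply hN
    ext k
    have := DFunLike.congr_fun h k
    simp only [Finsupp.add_apply, Finsupp.coe_zero, Pi.zero_apply] at this ⊢
    omega
  · rintro ⟨h1, h2⟩
    have he : e = 0 := by
      apply hvan
      constructor
      · intro k
        have := h1 k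
        simp only [Finsupp.add_apply] at this
        omega
      · intro k hk
        have := h2 k hk
        simp only [Finsupp.add_apply] at this
        omega
    rw [he, zero_mul]

lemma good_listprod {l : List (MvPolynomial (Fin d) 𝔽)} (hl : l ≠ [])
    (h : ∀ u ∈ l, Good u) : Good l.prod := by
  induction l with
  | nil => exact absurd rfl hl
  | cons u l ih =>
      rw [List.prod_cons]
      rcases eq_or_ne l [] with rfl | hlne
      · simpa using h u List.mem_cons_self
      · exact good_mul (h u List.mem_cons_self)
          (ih hlne (fun x hx => h x (List.mem_cons_of_mem u hx)))

lemma good_pair_coeff (hd : 1 ≤ d) {u v : MvPolynomial (Fin d) 𝔽}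
    (hu : Good u) (hv : Good v) : coeff (allOnes d) (u * v) = 0 := by
  obtain ⟨N, e, hN, hvan, rfl⟩ := hu
  obtain ⟨N', e', hN', hvan', rfl⟩ := hv
  rw [monomial_mul, coeff_monomial]
  split
  · next heq =>
      have happ : ∀ k, N k + N' k = 1 := by
        intro k
        have := DFunLike.congr_fun heq k
        simpa [allOnes_apply] using this
      rcases Nat.eq_zero_or_pos (N ⟨0, hd⟩) with h0 | h0
      · have he : e = 0 := by
          apply hvan
          refine ⟨fun k => by have := happ k; omega, fun k hk => ?_⟩
          have : k = (⟨0, hd⟩ : Fin d) := by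
            apply Fin.ext
            simpa using hk
          rw [this]; exact h0
        rw [he, zero_mul]
      · have h0' : N' ⟨0, hd⟩ = 0 := by have := happ ⟨0, hd⟩; omega
        have he : e' = 0 := by
          apply hvan'
          refine ⟨fun k => by have := happ k; omega, fun k hk => ?_⟩
          have : k = (⟨0, hd⟩ : Fin d) := by
            apply Fin.ext
            simpa using hk
          rw [this]; exact h0'
        rw [he, mul_zero]
  · rfl

lemma good_constantCoeff {u : MvPolynomial (Fin d) 𝔽} (hu : Good u) :
    constantCoeff u = 0 := by
  obtain ⟨N, e, hN, -, rfl⟩ := hu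
  rw [constantCoeff_monomial, if_neg hN]

end SumCoeffsAux

namespace SumCoeffsAux

open MvPolynomial

variable {𝔽 : Type} [Field 𝔽] {n d : ℕ}

def Uspan (𝔽 : Type) [Field 𝔽] (d : ℕ) : Submodule 𝔽 (MvPolynomial (Fin d) 𝔽) :=
  Submodule.span 𝔽 {u | Good u}

lemma coeff_mul_good_right (hd : 1 ≤ d) {x : MvPolynomial (Fin d) 𝔽}
    (hx : x ∈ Uspan 𝔽 d) {v : MvPolynomial (Fin d) 𝔽} (hv : Good v) :
    coeff (allOnes d) (x * v) = 0 := by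
  induction hx using Submodule.span_induction with
  | mem u hu => exact good_pair_coeff hd hu hv
  | zero => simp
  | add a b ha hb iha ihb => rw [add_mul, coeff_add, iha, ihb, add_zero]
  | smul c a ha iha => rw [smul_mul_assoc, coeff_smul, iha, smul_zero]

lemma U_pair (hd : 1 ≤ d) {x y : MvPolynomial (Fin d) 𝔽}
    (hx : x ∈ Uspan 𝔽 d) (hy : y ∈ Uspan 𝔽 d) :
    coeff (allOnes d) (x * y) = 0 := by
  induction hy using Submodule.span_induction with
  | mem v hv => exact coeff_mul_good_right hd hx hv
  | zero => simp
  | add a b ha hb iha ihb => rw [mul_add, coeff_add, iha, ihb, add_zero]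
  | smul c a ha iha => rw [mul_smul_comm, coeff_smul, iha, smul_zero]

lemma constantCoeff_U {x : MvPolynomial (Fin d) 𝔽} (hx : x ∈ Uspan 𝔽 d) :
    constantCoeff x = 0 := by
  induction hx using Submodule.span_induction with
  | mem u hu => exact good_constantCoeff hu
  | zero => simp
  | add a b ha hb iha ihb => rw [map_add, iha, ihb, add_zero]
  | smul c a ha iha => rw [smul_eq_C_mul, _root_.map_mul, iha, mul_zero]

lemma constantCoeff_phi (x : Rpoly 𝔽 n d) :
    constantCoeff (phi 𝔽 n d x) = constantCoeff x := by
  have hhom : (constantCoeff : MvPolynomial (Fin d) 𝔽 →+* 𝔽).comp (phi 𝔽 n d).toRingHom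
      = (constantCoeff : Rpoly 𝔽 n d →+* 𝔽) := by
    apply MvPolynomial.ringHom_ext
    · intro a; simp
    · intro q
      simp only [RingHom.comp_apply, AlgHom.toRingHom_eq_coe, RingHom.coe_coe]
      rw [phi, aeval_X]
      by_cases hq : q.1 = q.2.1
      · rw [if_pos hq, constantCoeff_monomial,
          if_neg (fun hz => one_ne_zero (Finsupp.single_eq_zero.mp hz))]
        simp
      · rw [if_neg hq]
        simp
  exact RingHom.congr_fun hhom x

lemma exists_ks {w : List (Matrix (Fin n) (Fin n) (Rpoly 𝔽 n d))}
    (hw : ∀ m ∈ w, (∃ k, m = Xgen 𝔽 n d k) ∨ (∃ k, m = (Xgen 𝔽 n d k)ᵀ)) :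
    ∃ ks : List (Fin d), List.Forall₂ Rel ks w := by
  induction w with
  | nil => exact ⟨[], List.Forall₂.nil⟩
  | cons m w ih =>
      obtain ⟨ks, hks⟩ := ih (fun x hx => hw x (List.mem_cons_of_mem m hx))
      rcases hw m List.mem_cons_self with ⟨k, rfl⟩ | ⟨k, rfl⟩
      · exact ⟨k :: ks, List.Forall₂.cons (Or.inl rfl) hks⟩
      · exact ⟨k :: ks, List.Forall₂.cons (Or.inr rfl) hks⟩

lemma phi_gen_good (hpn : ringChar 𝔽 ≤ n) {x : Rpoly 𝔽 n d}
    (hx : ∃ t, 1 ≤ t ∧ t ≤ n ∧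
      ∃ w : List (Matrix (Fin n) (Fin n) (Rpoly 𝔽 n d)), w ≠ [] ∧
        (∀ m ∈ w, (∃ k, m = Xgen 𝔽 n d k) ∨ (∃ k, m = (Xgen 𝔽 n d k)ᵀ)) ∧
        x = sigmaCoeff t w.prod) :
    Good (phi 𝔽 n d x) := by
  obtain ⟨t, ht1, htn, w, hwne, hw, rfl⟩ := hx
  obtain ⟨ks, hks⟩ := exists_ks hw
  have hksne : ks ≠ [] := by
    intro h
    apply hwne
    have hlen := List.Forall₂.length_eq hks
    rw [h] at hlen
    exact List.eq_nil_of_length_eq_zero hlen.symm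
  rw [phi_sigma t htn hks]
  cases ks with
  | nil => exact absurd rfl hksne
  | cons k₀ ks' =>
  refine ⟨t • cnt d (k₀ :: ks'), _, ?_, ?_, rfl⟩
  · intro h
    have h0 := DFunLike.congr_fun h k₀
    rw [Finsupp.smul_apply, smul_eq_mul, cnt_apply, List.count_cons_self] at h0
    simp only [Finsupp.coe_zero, Pi.zero_apply] at h0
    exact Nat.mul_ne_zero (by omega) (Nat.succ_ne_zero _) h0
  · rintro ⟨h1, h2⟩
    have hk0 := h1 k₀
    rw [Finsupp.smul_apply, smul_eq_mul, cnt_apply, List.count_cons_self] at hk0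
    have htle : t ≤ t * (List.count k₀ ks' + 1) := Nat.le_mul_of_pos_right t (Nat.succ_pos _)
    have ht : t = 1 := by omega
    subst ht
    have h0 : ∀ k ∈ (k₀ :: ks'), (k : ℕ) ≠ 0 := by
      intro k hk hk0
      have hz := h2 k hk0
      rw [Finsupp.smul_apply, smul_eq_mul, cnt_apply, one_mul] at hz
      have hpos : 0 < List.count k (k₀ :: ks') := List.count_pos_iff.mpr hk
      omega
    exact e_vanish hpn hksne h0

lemma phi_mem_U (hd : 1 ≤ d) (hpn : ringChar 𝔽 ≤ n) {g : Rpoly 𝔽 n d}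
    (hg : g ∈ invO 𝔽 n d) (hg0 : constantCoeff g = 0) :
    phi 𝔽 n d g ∈ Uspan 𝔽 d := by
  have hspan : g ∈ Submodule.span 𝔽
      ((Submonoid.closure {f | ∃ t, 1 ≤ t ∧ t ≤ n ∧
        ∃ w : List (Matrix (Fin n) (Fin n) (Rpoly 𝔽 n d)), w ≠ [] ∧
          (∀ m ∈ w, (∃ k, m = Xgen 𝔽 n d k) ∨ (∃ k, m = (Xgen 𝔽 n d k)ᵀ)) ∧
          f = sigmaCoeff t w.prod} : Submonoid (Rpoly 𝔽 n d)) : Set (Rpoly 𝔽 n d)) := by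
    have hmem : g ∈ Subalgebra.toSubmodule (Algebra.adjoin 𝔽 _) := hg
    rw [Algebra.adjoin_eq_span] at hmem
    exact hmem
  have hsup : phi 𝔽 n d g ∈ Uspan 𝔽 d ⊔ Submodule.span 𝔽 {(1 : MvPolynomial (Fin d) 𝔽)} := by
    clear hg hg0
    induction hspan using Submodule.span_induction with
    | mem x hx =>
        obtain ⟨l, hl, rfl⟩ := Submonoid.exists_list_of_mem_closure hx
        cases l with
        | nil =>
            apply Submodule.mem_sup_right
            apply Submodule.subset_span
            simp
        | cons a l =>
            apply Submodule.mem_sup_left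
            apply Submodule.subset_span
            have hmap : phi 𝔽 n d (List.prod (a :: l)) = ((a :: l).map (phi 𝔽 n d)).prod :=
              map_list_prod (phi 𝔽 n d) _
            rw [hmap]
            apply good_listprod (by simp)
            intro u hu
            obtain ⟨x, hx', rfl⟩ := List.mem_map.mp hu
            exact phi_gen_good hpn (hl x hx')
    | zero => simp
    | add a b ha hb iha ihb =>
        rw [map_add]
        exact Submodule.add_mem _ iha ihb
    | smul c a ha iha =>
        rw [_root_.map_smul]
        exact Submodule.smul_mem _ c iha
  obtain ⟨u, hu, y, hy, hsum⟩ := Submodule.mem_sup.mp hsup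
  obtain ⟨c, rfl⟩ := Submodule.mem_span_singleton.mp hy
  have hgc : constantCoeff (phi 𝔽 n d g) = 0 := by rw [constantCoeff_phi, hg0]
  have huc : constantCoeff u = 0 := constantCoeff_U hu
  have hc : c = 0 := by
    have hcc := congrArg constantCoeff hsum
    rw [map_add, huc, hgc, zero_add] at hcc
    simpa using hcc
  rw [← hsum, hc]
  simpa using hu

end SumCoeffsAux


open SumCoeffsAux

theorem sum_coeffs_eq_zero_of_decomposable
    (𝔽 : Type) [Field 𝔽] [Infinite 𝔽] (n d : ℕ) (hn : 2 ≤ n) (hd : 1 ≤ d)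
    (hp0 : 0 < ringChar 𝔽) (hpn : ringChar 𝔽 ≤ n) (hp2 : ringChar 𝔽 ≠ 2)
    (α : Equiv.Perm (Fin d) → (Fin d → Bool) → 𝔽)
    (hdec : Decomposable 𝔽 (invO 𝔽 n d)
      (∑ σ : Equiv.Perm (Fin d), ∑ δ : Fin d → Bool, α σ δ •
        Matrix.trace (List.ofFn (fun i : Fin d =>
          if δ i then (Xgen 𝔽 n d (σ i))ᵀ else Xgen 𝔽 n d (σ i))).prod)) :
    ∑ σ : Equiv.Perm (Fin d), ∑ δ : Fin d → Bool, α σ δ = 0 := by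
  classical
  have hn1 : 1 ≤ n := le_trans (by norm_num) hn
  set F : Rpoly 𝔽 n d := (∑ σ : Equiv.Perm (Fin d), ∑ δ : Fin d → Bool, α σ δ •
      Matrix.trace (List.ofFn (fun i : Fin d =>
        if δ i then (Xgen 𝔽 n d (σ i))ᵀ else Xgen 𝔽 n d (σ i))).prod) with hF
  let L : Rpoly 𝔽 n d →ₗ[𝔽] 𝔽 :=
    { toFun := fun x => MvPolynomial.coeff (allOnes d) (phi 𝔽 n d x)
      map_add' := by
        intro a b
        show MvPolynomial.coeff (allOnes d) (phi 𝔽 n d (a + b)) =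
          MvPolynomial.coeff (allOnes d) (phi 𝔽 n d a) +
            MvPolynomial.coeff (allOnes d) (phi 𝔽 n d b)
        rw [map_add, MvPolynomial.coeff_add]
      map_smul' := by
        intro c a
        show MvPolynomial.coeff (allOnes d) (phi 𝔽 n d (c • a)) =
          c • MvPolynomial.coeff (allOnes d) (phi 𝔽 n d a)
        rw [_root_.map_smul, MvPolynomial.coeff_smul] }
  have hLf : L F = ∑ σ : Equiv.Perm (Fin d), ∑ δ : Fin d → Bool, α σ δ := by
    rw [hF, map_sum]
    refine Finset.sum_congr rfl (fun σ _ => ?_)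
    rw [map_sum]
    refine Finset.sum_congr rfl (fun δ _ => ?_)
    rw [LinearMap.map_smul]
    have hphi : L (Matrix.trace (List.ofFn (fun i : Fin d =>
        if δ i then (Xgen 𝔽 n d (σ i))ᵀ else Xgen 𝔽 n d (σ i))).prod) = 1 := by
      show MvPolynomial.coeff (allOnes d) (phi 𝔽 n d _) = 1
      rw [phi_trace hd hn1 hp0 hpn σ δ, MvPolynomial.coeff_monomial, if_pos rfl]
    rw [hphi, smul_eq_mul, mul_one]
  have hdec' : F ∈ Submodule.span 𝔽
      {x : Rpoly 𝔽 n d | ∃ g ∈ invO 𝔽 n d, ∃ h ∈ invO 𝔽 n d,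
        (∃ i, 0 < i ∧ MvPolynomial.IsHomogeneous g i) ∧
        (∃ j, 0 < j ∧ MvPolynomial.IsHomogeneous h j) ∧ x = g * h} := hdec
  have hLzero' : ∀ y, y ∈ Submodule.span 𝔽
      {x : Rpoly 𝔽 n d | ∃ g ∈ invO 𝔽 n d, ∃ h ∈ invO 𝔽 n d,
        (∃ i, 0 < i ∧ MvPolynomial.IsHomogeneous g i) ∧
        (∃ j, 0 < j ∧ MvPolynomial.IsHomogeneous h j) ∧ x = g * h} → L y = 0 := by
    intro y hy
    induction hy using Submodule.span_induction with
    | mem x hx =>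
        obtain ⟨g, hg, h, hh, ⟨i, hi, hgi⟩, ⟨j, hj, hhj⟩, rfl⟩ := hx
        have hg0 : MvPolynomial.constantCoeff g = 0 := by
          rw [MvPolynomial.constantCoeff_eq]
          exact hgi.coeff_eq_zero (by rw [map_zero]; omega)
        have hh0 : MvPolynomial.constantCoeff h = 0 := by
          rw [MvPolynomial.constantCoeff_eq]
          exact hhj.coeff_eq_zero (by rw [map_zero]; omega)
        show MvPolynomial.coeff (allOnes d) (phi 𝔽 n d (g * h)) = 0
        rw [_root_.map_mul]
        exact U_pair hd (phi_mem_U hd hpn hg hg0) (phi_mem_U hd hpn hh hh0)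
    | zero => simp
    | add a b ha hb iha ihb => rw [map_add, iha, ihb, add_zero]
    | smul c a ha iha => rw [LinearMap.map_smul, iha, smul_zero]
  have hLzero : L F = 0 := hLzero' F hdec'
  rw [← hLf, hLzero]

end
end

section
/- Let 𝔽 be an infinite field of characteristic p with 0 < p ≤ n and p ≠ 2, and let d ≥ 1. Then every multilinear trace invariant tr(Y_{σ(1)} ⋯ Y_{σ(d)}), where σ ∈ S_d and each Y_i is either X_i or X_iᵀ, is indecomposable in R^{O(n)}; that is, it does not lie in the 𝔽-span of products g·h with g, h ∈ R^{O(n)} homogeneous of positive degree. -/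
open Matrix
noncomputable section

set_option maxHeartbeats 1000000
namespace MTIAux
open MvPolynomial

variable {𝔽 : Type} [Field 𝔽]

lemma coeff_comp_C_mul_X {S : Type*} [CommRing S] (q : Polynomial S) (c : S) (k : ℕ) :
    (q.comp (Polynomial.C c * Polynomial.X)).coeff k = q.coeff k * c ^ k := by
  classical
  rw [Polynomial.comp, Polynomial.eval₂_eq_sum, Polynomial.sum_def, Polynomial.finset_sum_coeff]
  have h : ∀ e ∈ q.support,
      (Polynomial.C (q.coeff e) * (Polynomial.C c * Polynomial.X) ^ e).coeff k
        = if e = k then q.coeff k * c ^ k else 0 := by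
    intro e _
    rw [mul_pow, ← Polynomial.C_pow, ← mul_assoc, ← Polynomial.C_mul, Polynomial.coeff_C_mul,
      Polynomial.coeff_X_pow]
    by_cases h : e = k
    · subst h; simp
    · rw [if_neg (Ne.symm h), if_neg h, mul_zero]
  rw [Finset.sum_congr rfl h, Finset.sum_ite_eq' q.support k]
  by_cases hk : k ∈ q.support
  · rw [if_pos hk]
  · rw [if_neg hk, Polynomial.notMem_support_iff.mp hk, zero_mul]

lemma charpoly_smul_coeff {S : Type*} [CommRing S] [IsDomain S] {n : ℕ} (c : S) (hc : c ≠ 0)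
    (B : Matrix (Fin n) (Fin n) S) {t : ℕ} (ht : t ≤ n) :
    (c • B).charpoly.coeff (n - t) = c ^ t * B.charpoly.coeff (n - t) := by
  classical
  set ψ : Polynomial S →+* Polynomial S :=
    Polynomial.eval₂RingHom Polynomial.C (Polynomial.C c * Polynomial.X) with hψ
  have key : ψ (c • B).charpoly = Polynomial.C (c ^ n) * B.charpoly := by
    rw [Matrix.charpoly, Matrix.charpoly, RingHom.map_det, RingHom.mapMatrix_apply]
    have hX : ψ Polynomial.X = Polynomial.C c * Polynomial.X := Polynomial.eval₂_X _ _
    have hC : ∀ a : S, ψ (Polynomial.C a) = Polynomial.C a := fun a => Polynomial.eval₂_C _ _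
    have hmat : (Matrix.charmatrix (c • B)).map ψ = Polynomial.C c • Matrix.charmatrix B := by
      refine Matrix.ext fun i j => ?_
      rw [Matrix.smul_apply]
      by_cases hij : i = j
      · subst hij
        rw [Matrix.map_apply, Matrix.charmatrix_apply_eq, map_sub, hX, hC,
          Matrix.charmatrix_apply_eq, smul_eq_mul, mul_sub,
          Matrix.smul_apply, smul_eq_mul, Polynomial.C_mul]
      · rw [Matrix.map_apply, Matrix.charmatrix_apply_ne _ _ _ hij, map_neg, hC,
          Matrix.charmatrix_apply_ne _ _ _ hij, smul_eq_mul, mul_neg,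
          Matrix.smul_apply, smul_eq_mul, Polynomial.C_mul]
    rw [hmat, Matrix.det_smul, Fintype.card_fin, ← Polynomial.C_pow]
  have h1 := congrArg (fun q => Polynomial.coeff q (n - t)) key
  simp only [Polynomial.coeff_C_mul] at h1
  have h2 : ψ (c • B).charpoly = ((c • B).charpoly).comp (Polynomial.C c * Polynomial.X) := rfl
  rw [h2, coeff_comp_C_mul_X] at h1
  have hcc : c ^ n = c ^ (n - t) * c ^ t := by rw [← pow_add]; congr 1; omega
  apply mul_left_cancel₀ (pow_ne_zero (n - t) hc)
  rw [← mul_comm ((c • B).charpoly.coeff (n - t)) (c ^ (n - t)), h1, hcc]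
  ring

lemma charpoly_zero {S : Type*} [CommRing S] (n : ℕ) :
    (0 : Matrix (Fin n) (Fin n) S).charpoly = Polynomial.X ^ n := by
  classical
  rw [Matrix.charpoly, Matrix.charmatrix, map_zero, sub_zero]
  have : (Matrix.scalar (Fin n)) (Polynomial.X : Polynomial S)
      = Matrix.diagonal (fun _ => Polynomial.X) := rfl
  rw [this, Matrix.det_diagonal, Finset.prod_const, Finset.card_univ, Fintype.card_fin]

lemma charpoly_coeff_mem {S : Type*} [CommRing S] {n : ℕ} (J : Ideal S)
    (W : Matrix (Fin n) (Fin n) S) (hW : ∀ i j, W i j ∈ J) {t : ℕ} (ht1 : 1 ≤ t) (htn : t ≤ n) :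
    W.charpoly.coeff (n - t) ∈ J := by
  classical
  have hmap : W.map (Ideal.Quotient.mk J) = 0 := by
    ext i j
    exact Ideal.Quotient.eq_zero_iff_mem.mpr (hW i j)
  have hcm := Matrix.charpoly_map W (Ideal.Quotient.mk J)
  rw [hmap, charpoly_zero] at hcm
  have : Ideal.Quotient.mk J (W.charpoly.coeff (n - t)) = 0 := by
    rw [← Polynomial.coeff_map, ← hcm, Polynomial.coeff_X_pow, if_neg (by omega)]
  exact Ideal.Quotient.eq_zero_iff_mem.mp this

lemma listProd_entry_mem {S : Type*} [CommRing S] {n : ℕ} (J : Ideal S) :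
    ∀ L : List (Matrix (Fin n) (Fin n) S),
      (∃ A ∈ L, ∀ i j, A i j ∈ J) → ∀ i j, L.prod i j ∈ J := by
  classical
  intro L
  induction L with
  | nil => rintro ⟨A, hA, _⟩; simp at hA
  | cons B L ih =>
    rintro ⟨A, hA, hAJ⟩ i j
    rw [List.prod_cons, Matrix.mul_apply]
    rcases List.mem_cons.mp hA with h | h
    · subst h
      exact Ideal.sum_mem _ fun k _ => J.mul_mem_right _ (hAJ i k)
    · exact Ideal.sum_mem _ fun k _ => J.mul_mem_left _ (ih ⟨A, h, hAJ⟩ k j)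



def Rm (𝔽 : Type) [Field 𝔽] (n p : ℕ) (c : ZMod p) : Matrix (Fin n) (Fin n) 𝔽 :=
  Matrix.of fun i j =>
    if (i : ℕ) < p ∧ (j : ℕ) < p ∧ ((j : ℕ) : ZMod p) = ((i : ℕ) : ZMod p) + c then 1 else 0

variable {n p : ℕ}

lemma Rm_mul (hp0 : 0 < p) (hpn : p ≤ n) (c c' : ZMod p) :
    Rm 𝔽 n p c * Rm 𝔽 n p c' = Rm 𝔽 n p (c + c') := by
  classical
  haveI : NeZero p := ⟨hp0.ne'⟩
  ext i j
  rw [mul_apply]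
  by_cases hi : (i : ℕ) < p
  · set k0 : Fin n := ⟨(((i : ℕ) : ZMod p) + c).val, lt_of_lt_of_le (ZMod.val_lt _) hpn⟩ with hk0
    have hk0p : (k0 : ℕ) < p := ZMod.val_lt _
    have h1 : ((k0 : ℕ) : ZMod p) = ((i : ℕ) : ZMod p) + c := by
      simp [hk0, ZMod.natCast_val, ZMod.cast_id]
    rw [Finset.sum_eq_single k0]
    · simp only [Rm, of_apply]
      rw [if_pos ⟨hi, hk0p, h1⟩, one_mul]
      by_cases hj : (j : ℕ) < p ∧ ((j : ℕ) : ZMod p) = ((i : ℕ) : ZMod p) + (c + c')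
      · rw [if_pos ⟨hk0p, hj.1, by rw [h1, hj.2]; ring⟩, if_pos ⟨hi, hj.1, hj.2⟩]
      · rw [if_neg, if_neg]
        · rintro ⟨_, hj1, hj2⟩; exact hj ⟨hj1, hj2⟩
        · rintro ⟨_, hj1, hj2⟩; rw [h1] at hj2; exact hj ⟨hj1, by rw [hj2]; ring⟩
    · intro b _ hb
      simp only [Rm, of_apply]
      rw [if_neg, zero_mul]
      rintro ⟨_, hbp, hbe⟩
      apply hb
      have hval : ((b : ℕ) : ZMod p).val = (b : ℕ) := ZMod.val_cast_of_lt hbp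
      apply Fin.ext
      rw [← hval, hbe]
    · intro h; exact absurd (Finset.mem_univ k0) h
  · simp only [Rm, of_apply]
    rw [if_neg (by tauto)]
    apply Finset.sum_eq_zero
    intro b _; rw [if_neg (by tauto), zero_mul]

lemma Rm_transpose (c : ZMod p) : (Rm 𝔽 n p c)ᵀ = Rm 𝔽 n p (-c) := by
  ext i j
  simp only [transpose_apply, Rm, of_apply]
  refine if_congr ⟨?_, ?_⟩ rfl rfl
  · rintro ⟨h1, h2, h3⟩; exact ⟨h2, h1, by rw [h3]; ring⟩
  · rintro ⟨h1, h2, h3⟩; exact ⟨h2, h1, by rw [h3]; ring⟩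

lemma Rm_trace [CharP 𝔽 p] (hp0 : 0 < p) (hpn : p ≤ n) (c : ZMod p) :
    (Rm 𝔽 n p c).trace = 0 := by
  classical
  rw [Matrix.trace]
  by_cases hc : c = 0
  · subst hc
    have hdiag : ∀ i : Fin n, diag (Rm 𝔽 n p 0) i = if (i : ℕ) < p then (1 : 𝔽) else 0 := by
      intro i
      simp only [diag, Rm, of_apply]
      by_cases h : (i : ℕ) < p
      · rw [if_pos ⟨h, h, by ring⟩, if_pos h]
      · rw [if_neg (by tauto), if_neg h]
    rw [Finset.sum_congr rfl fun i _ => hdiag i, Finset.sum_boole]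
    have hcard : (Finset.univ.filter fun i : Fin n => (i : ℕ) < p).card = p := by
      apply Finset.card_eq_of_bijective (fun i hi => ⟨i, lt_of_lt_of_le hi hpn⟩)
      · intro a ha
        simp only [Finset.mem_filter] at ha
        exact ⟨(a : ℕ), ha.2, Fin.ext rfl⟩
      · intro i hi
        simp only [Finset.mem_filter]
        exact ⟨Finset.mem_univ _, hi⟩
      · intro i j hi hj hij
        simpa using congrArg Fin.val hij
    rw [hcard]
    exact CharP.cast_eq_zero 𝔽 p
  · apply Finset.sum_eq_zero
    intro i _
    simp only [diag, Rm, of_apply]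
    rw [if_neg]
    rintro ⟨h1, h2, h3⟩
    exact hc (by have := h3; rwa [left_eq_add] at this)



variable {n d p : ℕ}

/-- the substitution -/
def phiv (𝔽 : Type) [Field 𝔽] (n d p : ℕ) (k₀ : Fin d) (Q : Matrix (Fin n) (Fin n) 𝔽) :
    Fin n × Fin n × Fin d → MvPolynomial (Option (Fin d)) 𝔽 :=
  fun v => X (some v.2.2) * C (Rm 𝔽 n p 1 v.1 v.2.1) +
    (if v.2.2 = k₀ then X none * C (Q v.1 v.2.1) else 0)

lemma mapXgen (k₀ : Fin d) (Q : Matrix (Fin n) (Fin n) 𝔽) {k : Fin d} (hk : k ≠ k₀) :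
    (Xgen 𝔽 n d k).map (MvPolynomial.aeval (phiv 𝔽 n d p k₀ Q)) =
      (X (some k) : MvPolynomial (Option (Fin d)) 𝔽) • (Rm 𝔽 n p 1).map C := by
  ext i j
  simp only [Matrix.map_apply, Xgen, aeval_X, phiv, hk, if_false, add_zero,
    Matrix.smul_apply, smul_eq_mul]

lemma mapXgen0 (k₀ : Fin d) (Q : Matrix (Fin n) (Fin n) 𝔽) :
    (Xgen 𝔽 n d k₀).map (MvPolynomial.aeval (phiv 𝔽 n d p k₀ Q)) =
      (X (some k₀) : MvPolynomial (Option (Fin d)) 𝔽) • (Rm 𝔽 n p 1).map C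
        + (X none : MvPolynomial (Option (Fin d)) 𝔽) • Q.map C := by
  ext i j
  simp only [Matrix.map_apply, Xgen, aeval_X, phiv, if_true, Matrix.add_apply,
    Matrix.smul_apply, smul_eq_mul]

lemma transpose_map_smul (u : MvPolynomial (Option (Fin d)) 𝔽) (A : Matrix (Fin n) (Fin n) 𝔽) :
    (u • A.map (C : 𝔽 → MvPolynomial (Option (Fin d)) 𝔽))ᵀ = u • (Aᵀ.map C) := by
  rw [Matrix.transpose_smul, Matrix.transpose_map]

lemma ofFn_prod_form {σ' : Type} (hp0 : 0 < p) (hpn : p ≤ n) :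
    ∀ (m : ℕ) (ks : Fin (m + 1) → σ') (cs : Fin (m + 1) → ZMod p),
    (List.ofFn (fun i => (X (ks i) : MvPolynomial σ' 𝔽) •
        (Rm 𝔽 n p (cs i)).map (C : 𝔽 → MvPolynomial σ' 𝔽))).prod
      = (monomial (∑ i, Finsupp.single (ks i) 1) (1 : 𝔽)) •
        (Rm 𝔽 n p (∑ i, cs i)).map (C : 𝔽 → MvPolynomial σ' 𝔽) := by
  intro m
  induction m with
  | zero =>
    intro ks cs
    rw [List.ofFn_succ]
    simp only [List.ofFn_zero, List.prod_cons, List.prod_nil, mul_one, Fin.sum_univ_succ,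
      Fin.sum_univ_zero, add_zero]
    rw [X]
  | succ m ih =>
    intro ks cs
    rw [List.ofFn_succ, List.prod_cons, ih (fun i => ks i.succ) (fun i => cs i.succ),
      Matrix.smul_mul, Matrix.mul_smul, smul_smul, ← Matrix.map_mul, Rm_mul hp0 hpn,
      Fin.sum_univ_succ (f := fun i => Finsupp.single (ks i) (1:ℕ)),
      Fin.sum_univ_succ (f := fun i => cs i)]
    congr 1
    show X (ks 0) * monomial _ 1 = _
    rw [X, monomial_mul, one_mul]

lemma trace_map_ringHom {S S' : Type} [CommRing S] [CommRing S'] (f : S →+* S')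
    (A : Matrix (Fin n) (Fin n) S) : (A.map f).trace = f A.trace := by
  simp only [Matrix.trace, Matrix.diag, Matrix.map_apply, map_sum]


lemma genInZ [CharP 𝔽 p] (hp0 : 0 < p) (hpn : p ≤ n)
    (k₀ : Fin d) (Q : Matrix (Fin n) (Fin n) 𝔽)
    (M : Option (Fin d) →₀ ℕ) (hMk₀ : M (some k₀) = 0) (hM1 : ∀ v, M v ≤ 1)
    {t : ℕ} (ht1 : 1 ≤ t) (htn : t ≤ n)
    (w : List (Matrix (Fin n) (Fin n) (Rpoly 𝔽 n d))) (hw : w ≠ [])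
    (hform : ∀ A ∈ w, (∃ k, A = Xgen 𝔽 n d k) ∨ (∃ k, A = (Xgen 𝔽 n d k)ᵀ)) :
    ∀ m : Option (Fin d) →₀ ℕ, m ≤ M → m none = 0 →
      coeff m ((MvPolynomial.aeval (phiv 𝔽 n d p k₀ Q)) (sigmaCoeff t w.prod)) = 0 := by
  classical
  intro m hm hmnone
  set Φ := MvPolynomial.aeval (R := 𝔽) (phiv 𝔽 n d p k₀ Q) with hΦdef
  have hσ : Φ (sigmaCoeff t w.prod) =
      (-1) ^ t * (((w.prod).map ⇑Φ).charpoly.coeff (n - t)) := by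
    rw [sigmaCoeff, _root_.map_mul, map_pow, map_neg, _root_.map_one]
    congr 1
    have hcm : (w.prod.map ⇑Φ).charpoly = Polynomial.map Φ.toRingHom w.prod.charpoly :=
      Matrix.charpoly_map w.prod Φ.toRingHom
    rw [hcm, Polynomial.coeff_map]
    rfl
  set Φm : Matrix (Fin n) (Fin n) (Rpoly 𝔽 n d) →
      Matrix (Fin n) (Fin n) (MvPolynomial (Option (Fin d)) 𝔽) :=
    fun A => A.map ⇑Φ with hΦm
  have hprodmap : (w.prod).map ⇑Φ = (w.map Φm).prod := by
    have h := map_list_prod (RingHom.mapMatrix (m := Fin n) Φ.toRingHom) w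
    simp only [RingHom.mapMatrix_apply, AlgHom.coe_toRingHom] at h
    exact h
  rw [hσ, hprodmap]
  by_cases hk : ∃ A ∈ w, A = Xgen 𝔽 n d k₀ ∨ A = (Xgen 𝔽 n d k₀)ᵀ
  · set J : Ideal (MvPolynomial (Option (Fin d)) 𝔽) :=
      Ideal.span {(X (some k₀) : MvPolynomial (Option (Fin d)) 𝔽), (X none)} with hJ
    obtain ⟨A, hAw, hAeq⟩ := hk
    have hmem : ∀ a b : Fin n, (Φ (X (a, b, k₀) : Rpoly 𝔽 n d)) ∈ J := by
      intro a b
      rw [hΦdef, aeval_X]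
      show X (some k₀) * C (Rm 𝔽 n p 1 a b) +
        (if k₀ = k₀ then X none * C (Q a b) else 0) ∈ J
      rw [if_pos rfl]
      exact Ideal.mem_span_pair.mpr ⟨C (Rm 𝔽 n p 1 a b), C (Q a b), by ring⟩
    have hAJ : ∀ i j, (Φm A) i j ∈ J := by
      intro i j
      rcases hAeq with rfl | rfl
      · exact hmem i j
      · exact hmem j i
    have hWJ : ∀ i j, ((w.map Φm).prod) i j ∈ J :=
      listProd_entry_mem J _ ⟨Φm A, List.mem_map_of_mem hAw, hAJ⟩
    have hcoef : ((w.map Φm).prod).charpoly.coeff (n - t) ∈ J :=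
      charpoly_coeff_mem J _ hWJ ht1 htn
    have hfinal : (-1 : MvPolynomial (Option (Fin d)) 𝔽) ^ t *
        ((w.map Φm).prod).charpoly.coeff (n - t) ∈ J :=
      J.mul_mem_left _ hcoef
    obtain ⟨a, b, hab⟩ := Ideal.mem_span_pair.mp hfinal
    rw [← hab, coeff_add, coeff_mul_X', coeff_mul_X', if_neg, if_neg, add_zero]
    · rw [Finsupp.mem_support_iff]
      simpa using hmnone
    · rw [Finsupp.mem_support_iff]
      have h0 := Finsupp.le_def.mp hm (some k₀)
      rw [hMk₀] at h0
      simpa using Nat.le_zero.mp h0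
  · push_neg at hk
    have hforms : ∀ B ∈ w.map Φm, ∃ (k : Fin d) (c : ZMod p),
        B = (X (some k) : MvPolynomial (Option (Fin d)) 𝔽) • (Rm 𝔽 n p c).map C := by
      rintro B hB
      obtain ⟨A, hAw, rfl⟩ := List.mem_map.mp hB
      rcases hform A hAw with ⟨k, rfl⟩ | ⟨k, rfl⟩
      · have hkk : k ≠ k₀ := fun h => by subst h; exact (hk _ hAw).1 rfl
        exact ⟨k, 1, mapXgen k₀ Q hkk⟩
      · have hkk : k ≠ k₀ := fun h => by subst h; exact (hk _ hAw).2 rfl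
        refine ⟨k, -1, ?_⟩
        show (Xgen 𝔽 n d k)ᵀ.map ⇑Φ = X (some k) • (Rm 𝔽 n p (-1)).map C
        rw [Matrix.transpose_map, mapXgen k₀ Q hkk, Matrix.transpose_smul,
          ← Matrix.transpose_map, Rm_transpose]
    have hPF : ∀ (L : List (Matrix (Fin n) (Fin n) (MvPolynomial (Option (Fin d)) 𝔽))),
        L ≠ [] → (∀ B ∈ L, ∃ (k : Fin d) (c : ZMod p),
          B = (X (some k) : MvPolynomial (Option (Fin d)) 𝔽) • (Rm 𝔽 n p c).map C) →
        ∃ (ν : Option (Fin d) →₀ ℕ) (c : ZMod p) (v : Option (Fin d)),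
          1 ≤ ν v ∧ L.prod = (monomial ν (1:𝔽)) • (Rm 𝔽 n p c).map C := by
      intro L
      induction L with
      | nil => intro h; exact absurd rfl h
      | cons B L ih =>
        intro _ hBs
        obtain ⟨k, c, rfl⟩ := hBs B List.mem_cons_self
        by_cases hL : L = []
        · subst hL
          refine ⟨Finsupp.single (some k) 1, c, some k, by simp, ?_⟩
          rw [List.prod_cons, List.prod_nil, mul_one, X]
        · obtain ⟨ν, c', v, hv, hprod⟩ := ih hL (fun B hB => hBs B (List.mem_cons_of_mem _ hB))
          refine ⟨Finsupp.single (some k) 1 + ν, c + c', v, ?_, ?_⟩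
          · refine le_trans hv ?_
            simp [Finsupp.add_apply]
          · rw [List.prod_cons, hprod, Matrix.smul_mul, Matrix.mul_smul, smul_smul,
              ← Matrix.map_mul, Rm_mul hp0 hpn, X, monomial_mul, one_mul]
    obtain ⟨ν, c, v, hv, hprod⟩ := hPF _ (by simpa using hw) hforms
    rw [hprod]
    have hmono : (monomial ν (1:𝔽)) ≠ 0 := by
      rw [Ne, monomial_eq_zero]; exact one_ne_zero
    rw [charpoly_smul_coeff _ hmono _ htn, Matrix.charpoly_map, Polynomial.coeff_map,
      monomial_pow, one_pow]
    set b : 𝔽 := (Rm 𝔽 n p c).charpoly.coeff (n - t) with hbdef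
    have hrw : ((-1 : MvPolynomial (Option (Fin d)) 𝔽)) ^ t * ((monomial (t • ν) (1:𝔽)) * C b)
        = monomial (t • ν) ((-1:𝔽)^t * b) := by
      have h1 : ((-1 : MvPolynomial (Option (Fin d)) 𝔽)) = C (-1 : 𝔽) := by simp
      rw [h1, ← C_pow, mul_comm (monomial (t • ν) (1:𝔽)) (C b), ← mul_assoc, ← C_mul,
        C_mul_monomial, mul_one]
    rw [hrw, coeff_monomial]
    by_cases hmeq : t • ν = m
    · rw [if_pos hmeq]
      have hle : (t • ν) v ≤ 1 := by
        rw [hmeq]; exact le_trans (Finsupp.le_def.mp hm v) (hM1 v)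
      rw [Finsupp.smul_apply, smul_eq_mul] at hle
      have htv : t ≤ t * ν v := Nat.le_mul_of_pos_right t (by omega)
      have ht' : t = 1 := by omega
      subst ht'
      haveI : Nonempty (Fin n) := ⟨⟨0, by omega⟩⟩
      have htr := Matrix.trace_eq_neg_charpoly_coeff (Rm 𝔽 n p c)
      rw [Rm_trace hp0 hpn, Fintype.card_fin] at htr
      have hb0 : b = 0 := by rw [hbdef]; exact neg_eq_zero.mp htr.symm
      rw [hb0, mul_zero]
    · rw [if_neg hmeq]

lemma constCoeff_aeval (k₀ : Fin d) (Q : Matrix (Fin n) (Fin n) 𝔽) (g : Rpoly 𝔽 n d) {i : ℕ}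
    (hi : 0 < i) (hg : g.IsHomogeneous i) :
    coeff 0 ((MvPolynomial.aeval (phiv 𝔽 n d p k₀ Q)) g) = 0 := by
  have h1 : (constantCoeff : MvPolynomial (Option (Fin d)) 𝔽 →+* 𝔽)
      ((MvPolynomial.aeval (phiv 𝔽 n d p k₀ Q)) g)
      = eval₂ ((constantCoeff : MvPolynomial (Option (Fin d)) 𝔽 →+* 𝔽).comp C)
          ((constantCoeff : MvPolynomial (Option (Fin d)) 𝔽 →+* 𝔽) ∘ (phiv 𝔽 n d p k₀ Q)) g := by
    rw [aeval_def, algebraMap_eq, eval₂_comp_left]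
  have h2 : ((constantCoeff : MvPolynomial (Option (Fin d)) 𝔽 →+* 𝔽).comp C) = RingHom.id 𝔽 :=
    RingHom.ext fun a => constantCoeff_C _ a
  have h3 : ((constantCoeff : MvPolynomial (Option (Fin d)) 𝔽 →+* 𝔽) ∘ (phiv 𝔽 n d p k₀ Q))
      = fun _ => (0 : 𝔽) := by
    funext v
    simp only [Function.comp_apply, phiv, map_add, _root_.map_mul, constantCoeff_X, zero_mul,
      zero_add]
    split
    · rw [_root_.map_mul, constantCoeff_X, zero_mul]
    · exact map_zero _
  have h4 : coeff 0 ((MvPolynomial.aeval (phiv 𝔽 n d p k₀ Q)) g)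
      = eval₂ (RingHom.id 𝔽) (fun _ => (0:𝔽)) g := by
    rw [← h2, ← h3, ← h1, constantCoeff_eq]
  rw [h4]
  have h5 : eval₂ (RingHom.id 𝔽) (fun _ => (0:𝔽)) g = eval (fun _ => (0:𝔽)) g := rfl
  rw [h5, eval_zero', constantCoeff_eq]
  exact hg.coeff_eq_zero (by simp; omega)



/-- trace of a single matrix-unit times a shift -/
lemma trace_E0_mul (aI b0 : Fin n)
    (N : Matrix (Fin n) (Fin n) 𝔽) :
    ((Matrix.of fun i j => if i = aI ∧ j = b0 then (1:𝔽) else 0) * N).trace = N b0 aI := by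
  classical
  rw [Matrix.trace]
  have h1 : ∀ i : Fin n,
      ((Matrix.of fun i j => if i = aI ∧ j = b0 then (1:𝔽) else 0) * N).diag i
        = if i = aI then N b0 i else 0 := by
    intro i
    rw [Matrix.diag_apply, Matrix.mul_apply]
    have h2 : ∀ k : Fin n,
        (Matrix.of fun i j => if i = aI ∧ j = b0 then (1:𝔽) else 0) i k * N k i
          = if i = aI then (if k = b0 then N k i else 0) else 0 := by
      intro k
      simp only [of_apply, ite_and, ite_mul, one_mul, zero_mul]
    rw [Finset.sum_congr rfl fun k _ => h2 k]
    by_cases h : i = aI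
    · subst h
      simp only [eq_self_iff_true, if_true]
      rw [Finset.sum_ite_eq' Finset.univ b0 fun k => N k i]
      simp
    · simp only [if_neg h]
      exact Finset.sum_eq_zero fun k _ => rfl
  rw [Finset.sum_congr rfl fun i _ => h1 i,
    Finset.sum_ite_eq' Finset.univ aI fun i => N b0 i, if_pos (Finset.mem_univ _)]

lemma Rm_entry_one [NeZero p] (hp0 : 0 < p) (hpn : p ≤ n) (cT : ZMod p) (aI b0 : Fin n)
    (haI : (aI : ℕ) = cT.val) (hb0 : (b0 : ℕ) = 0) :
    Rm 𝔽 n p cT b0 aI = 1 := by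
  have h1 : ((aI : ℕ) : ZMod p) = ((b0 : ℕ) : ZMod p) + cT := by
    rw [haI, hb0]
    simp [ZMod.natCast_val, ZMod.cast_id]
  have h2 : (aI : ℕ) < p := by rw [haI]; exact ZMod.val_lt _
  have h3 : (b0 : ℕ) < p := by omega
  rw [Rm, of_apply, if_pos ⟨h3, h2, h1⟩]

lemma trace_head_mul [CharP 𝔽 p] (hp0 : 0 < p) (hpn : p ≤ n) {σ' : Type}
    (y z u : MvPolynomial σ' 𝔽) (c c' : ZMod p) (B : Matrix (Fin n) (Fin n) 𝔽) :
    ((y • (Rm 𝔽 n p c).map (C : 𝔽 → MvPolynomial σ' 𝔽) + z • B.map (C : 𝔽 → MvPolynomial σ' 𝔽))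
        * (u • (Rm 𝔽 n p c').map (C : 𝔽 → MvPolynomial σ' 𝔽))).trace
      = (z * u) * C ((B * Rm 𝔽 n p c').trace) := by
  rw [Matrix.add_mul, Matrix.smul_mul, Matrix.mul_smul, Matrix.smul_mul, Matrix.mul_smul,
    smul_smul, smul_smul, ← Matrix.map_mul, ← Matrix.map_mul, Rm_mul hp0 hpn,
    Matrix.trace_add, Matrix.trace_smul, Matrix.trace_smul,
    trace_map_ringHom (C : 𝔽 →+* MvPolynomial σ' 𝔽),
    trace_map_ringHom (C : 𝔽 →+* MvPolynomial σ' 𝔽),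
    Rm_trace hp0 hpn, map_zero, smul_zero, zero_add, smul_eq_mul]

lemma trace_head [CharP 𝔽 p] (hp0 : 0 < p) (hpn : p ≤ n) {σ' : Type}
    (y z : MvPolynomial σ' 𝔽) (c : ZMod p) (B : Matrix (Fin n) (Fin n) 𝔽) :
    (y • (Rm 𝔽 n p c).map (C : 𝔽 → MvPolynomial σ' 𝔽) +
        z • B.map (C : 𝔽 → MvPolynomial σ' 𝔽)).trace
      = z * C B.trace := by
  rw [Matrix.trace_add, Matrix.trace_smul, Matrix.trace_smul,
    trace_map_ringHom (C : 𝔽 →+* MvPolynomial σ' 𝔽),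
    trace_map_ringHom (C : 𝔽 →+* MvPolynomial σ' 𝔽),
    Rm_trace hp0 hpn, map_zero, smul_zero, zero_add, smul_eq_mul]

lemma mainValue {n p : ℕ} [CharP 𝔽 p] [NeZero p] (hp0 : 0 < p) (hpn : p ≤ n)
    {d' : ℕ} (σ : Equiv.Perm (Fin (d' + 1))) (δ : Fin (d' + 1) → Bool)
    (cT : ZMod p) (hcT : cT = ∑ i : Fin d', (if δ i.succ then (-1 : ZMod p) else 1))
    (aI b0 : Fin n) (haI : (aI : ℕ) = cT.val) (hb0 : (b0 : ℕ) = 0)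
    (E0 : Matrix (Fin n) (Fin n) 𝔽)
    (hE0 : E0 = Matrix.of fun i j => if i = aI ∧ j = b0 then (1:𝔽) else 0)
    (Q : Matrix (Fin n) (Fin n) 𝔽) (hQ : Q = if δ 0 then E0ᵀ else E0) :
    MvPolynomial.coeff
      (Finsupp.single none 1 + ∑ i : Fin d', Finsupp.single (some (σ i.succ)) (1 : ℕ))
      ((MvPolynomial.aeval (phiv 𝔽 n (d' + 1) p (σ 0) Q))
        ((List.ofFn fun i =>
          if δ i then (Xgen 𝔽 n (d' + 1) (σ i))ᵀ else Xgen 𝔽 n (d' + 1) (σ i)).prod.trace)) = 1 := by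
  classical
  have hhead : ((if δ 0 then (Xgen 𝔽 n (d' + 1) (σ 0))ᵀ else Xgen 𝔽 n (d' + 1) (σ 0))).map
        ⇑(MvPolynomial.aeval (phiv 𝔽 n (d' + 1) p (σ 0) Q))
      = (X (some (σ 0)) : MvPolynomial (Option (Fin (d' + 1))) 𝔽) •
          (Rm 𝔽 n p (if δ 0 then -1 else 1)).map C +
          (X none : MvPolynomial (Option (Fin (d' + 1))) 𝔽) •
            E0.map (C : 𝔽 → MvPolynomial (Option (Fin (d' + 1))) 𝔽) := by
    by_cases hδ : δ 0
    · rw [if_pos hδ, if_pos hδ]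
      show (Xgen 𝔽 n (d' + 1) (σ 0))ᵀ.map ⇑(MvPolynomial.aeval (phiv 𝔽 n (d' + 1) p (σ 0) Q))
        = _
      rw [Matrix.transpose_map, mapXgen0 (σ 0) Q, Matrix.transpose_add, Matrix.transpose_smul,
        Matrix.transpose_smul, ← Matrix.transpose_map, ← Matrix.transpose_map, Rm_transpose,
        hQ, if_pos hδ, Matrix.transpose_transpose]
    · rw [if_neg hδ, if_neg hδ, mapXgen0 (σ 0) Q, hQ, if_neg hδ]
  have htail : ∀ i : Fin d',
      ((if δ i.succ then (Xgen 𝔽 n (d' + 1) (σ i.succ))ᵀ else Xgen 𝔽 n (d' + 1) (σ i.succ))).map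
        ⇑(MvPolynomial.aeval (phiv 𝔽 n (d' + 1) p (σ 0) Q))
      = (X (some (σ i.succ)) : MvPolynomial (Option (Fin (d' + 1))) 𝔽) •
          (Rm 𝔽 n p (if δ i.succ then -1 else 1)).map C := by
    intro i
    have hne : σ i.succ ≠ σ 0 := fun h => Fin.succ_ne_zero i (σ.injective h)
    by_cases hδ : δ i.succ
    · rw [if_pos hδ, if_pos hδ]
      show (Xgen 𝔽 n (d' + 1) (σ i.succ))ᵀ.map
        ⇑(MvPolynomial.aeval (phiv 𝔽 n (d' + 1) p (σ 0) Q)) = _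
      rw [Matrix.transpose_map, mapXgen (σ 0) Q hne, Matrix.transpose_smul,
        ← Matrix.transpose_map, Rm_transpose]
    · rw [if_neg hδ, if_neg hδ]
      exact mapXgen (σ 0) Q hne
  have h1 : (MvPolynomial.aeval (phiv 𝔽 n (d' + 1) p (σ 0) Q))
        ((List.ofFn fun i =>
          if δ i then (Xgen 𝔽 n (d' + 1) (σ i))ᵀ else Xgen 𝔽 n (d' + 1) (σ i)).prod.trace)
      = ((List.ofFn fun i =>
          ((if δ i then (Xgen 𝔽 n (d' + 1) (σ i))ᵀ else Xgen 𝔽 n (d' + 1) (σ i)).map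
            ⇑(MvPolynomial.aeval (phiv 𝔽 n (d' + 1) p (σ 0) Q)))).prod).trace := by
    have ha := trace_map_ringHom
      (MvPolynomial.aeval (phiv 𝔽 n (d' + 1) p (σ 0) Q)).toRingHom
      ((List.ofFn fun i =>
          if δ i then (Xgen 𝔽 n (d' + 1) (σ i))ᵀ else Xgen 𝔽 n (d' + 1) (σ i)).prod)
    rw [AlgHom.toRingHom_eq_coe, AlgHom.coe_toRingHom] at ha
    rw [← ha]
    congr 1
    have h := map_list_prod
      (RingHom.mapMatrix (m := Fin n) (MvPolynomial.aeval (phiv 𝔽 n (d' + 1) p (σ 0) Q)).toRingHom)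
      (List.ofFn fun i =>
          if δ i then (Xgen 𝔽 n (d' + 1) (σ i))ᵀ else Xgen 𝔽 n (d' + 1) (σ i))
    simp only [RingHom.mapMatrix_apply, List.map_ofFn, AlgHom.toRingHom_eq_coe,
      AlgHom.coe_toRingHom] at h
    exact h
  rw [h1, List.ofFn_succ, List.prod_cons]
  have h2 : (List.ofFn fun i : Fin d' =>
        ((if δ i.succ then (Xgen 𝔽 n (d' + 1) (σ i.succ))ᵀ else Xgen 𝔽 n (d' + 1) (σ i.succ)).map
          ⇑(MvPolynomial.aeval (phiv 𝔽 n (d' + 1) p (σ 0) Q))))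
      = List.ofFn fun i : Fin d' =>
          (X (some (σ i.succ)) : MvPolynomial (Option (Fin (d' + 1))) 𝔽) •
            (Rm 𝔽 n p (if δ i.succ then -1 else 1)).map C :=
    congrArg List.ofFn (funext htail)
  rw [hhead, h2]
  rcases Nat.eq_zero_or_pos d' with hd | hd
  · subst hd
    have hcT0 : cT = 0 := by rw [hcT]; simp
    rw [show (List.ofFn fun i : Fin 0 =>
        (X (some (σ i.succ)) : MvPolynomial (Option (Fin 1)) 𝔽) •
          (Rm 𝔽 n p (if δ i.succ then -1 else 1)).map C) = [] from List.ofFn_zero,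
      List.prod_nil, mul_one, trace_head hp0 hpn]
    have hab : b0 = aI := by
      apply Fin.ext
      rw [hb0, haI, hcT0, ZMod.val_zero]
    have hE0tr : E0.trace = 1 := by
      have h3 := trace_E0_mul (𝔽 := 𝔽) aI b0 1
      rw [mul_one] at h3
      rw [hE0, h3, hab, Matrix.one_apply_eq]
    rw [hE0tr, MvPolynomial.C_1, mul_one]
    simp [MvPolynomial.X, coeff_monomial]
  · obtain ⟨m, rfl⟩ : ∃ m, d' = m + 1 := ⟨d' - 1, by omega⟩
    rw [ofFn_prod_form hp0 hpn m (fun i => some (σ i.succ))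
      (fun i => if δ i.succ then -1 else 1), trace_head_mul hp0 hpn]
    have hsum : (∑ i : Fin (m + 1), (if δ i.succ then (-1 : ZMod p) else 1)) = cT := hcT.symm
    rw [hsum]
    have hE0tr : (E0 * Rm 𝔽 n p cT).trace = 1 := by
      rw [hE0, trace_E0_mul aI b0 (Rm 𝔽 n p cT), Rm_entry_one hp0 hpn cT aI b0 haI hb0]
    rw [hE0tr, MvPolynomial.C_1, mul_one, X, monomial_mul, one_mul, coeff_monomial, if_pos rfl]




end MTIAux

theorem multilinear_trace_indecomposable
    (𝔽 : Type) [Field 𝔽] [Infinite 𝔽] (n d : ℕ) (hn : 2 ≤ n) (hd : 1 ≤ d)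
    (hp0 : 0 < ringChar 𝔽) (hpn : ringChar 𝔽 ≤ n) (hp2 : ringChar 𝔽 ≠ 2)
    (σ : Equiv.Perm (Fin d)) (δ : Fin d → Bool) :
    ¬ Decomposable 𝔽 (invO 𝔽 n d)
      (Matrix.trace (List.ofFn (fun i : Fin d =>
        if δ i then (Xgen 𝔽 n d (σ i))ᵀ else Xgen 𝔽 n d (σ i))).prod) := by
  classical
  intro hdec
  obtain ⟨d', rfl⟩ : ∃ d', d = d' + 1 := ⟨d - 1, by omega⟩
  haveI hchar : CharP 𝔽 (ringChar 𝔽) := ringChar.charP 𝔽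
  haveI : NeZero (ringChar 𝔽) := ⟨hp0.ne'⟩
  set p := ringChar 𝔽 with hpdef
  set cT : ZMod p := ∑ i : Fin d', (if δ i.succ then (-1 : ZMod p) else 1) with hcT
  have haIlt : cT.val < n := lt_of_lt_of_le (ZMod.val_lt cT) hpn
  set aI : Fin n := ⟨cT.val, haIlt⟩ with haIdef
  set b0 : Fin n := ⟨0, by omega⟩ with hb0def
  set E0 : Matrix (Fin n) (Fin n) 𝔽 :=
    Matrix.of fun i j => if i = aI ∧ j = b0 then (1 : 𝔽) else 0 with hE0
  set Q : Matrix (Fin n) (Fin n) 𝔽 := if δ 0 then E0ᵀ else E0 with hQ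
  set k₀ : Fin (d' + 1) := σ 0 with hk₀
  set Φ := MvPolynomial.aeval (R := 𝔽) (MTIAux.phiv 𝔽 n (d' + 1) p k₀ Q) with hΦ
  set νT : Option (Fin (d' + 1)) →₀ ℕ :=
    ∑ i : Fin d', Finsupp.single (some (σ i.succ)) 1 with hνT
  set Mm : Option (Fin (d' + 1)) →₀ ℕ := Finsupp.single none 1 + νT with hMm
  -- basic properties of the target monomial
  have hνTnone : νT none = 0 := by
    rw [hνT, Finsupp.finset_sum_apply]
    exact Finset.sum_eq_zero fun i _ => Finsupp.single_eq_of_ne (by simp)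
  have hνTk₀ : νT (some k₀) = 0 := by
    rw [hνT, Finsupp.finset_sum_apply]
    refine Finset.sum_eq_zero fun i _ => Finsupp.single_eq_of_ne ?_
    simp only [Ne, Option.some.injEq, hk₀]
    exact fun h => Fin.succ_ne_zero i (σ.injective h).symm
  have hνT1 : ∀ v, νT v ≤ 1 := by
    intro v
    cases v with
    | none => rw [hνTnone]; omega
    | some k =>
      rw [hνT, Finsupp.finset_sum_apply]
      have hcongr : ∀ i : Fin d',
          (Finsupp.single (some (σ i.succ)) (1 : ℕ)) (some k)
            = if i.succ = σ.symm k then 1 else 0 := by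
        intro i
        rw [Finsupp.single_apply]
        refine if_congr ?_ rfl rfl
        constructor
        · intro h
          exact (Equiv.eq_symm_apply σ).mpr (Option.some.inj h)
        · intro h
          rw [show (σ i.succ) = k from by rw [h, Equiv.apply_symm_apply]]
      rw [Finset.sum_congr rfl fun i _ => hcongr i, Finset.sum_boole]
      have hcard : (Finset.univ.filter fun i : Fin d' => i.succ = σ.symm k).card ≤ 1 :=
        Finset.card_le_one.mpr fun a ha b hb => by
          simp only [Finset.mem_filter] at ha hb
          exact Fin.succ_injective _ (ha.2.trans hb.2.symm)
      simpa using hcard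
  have hMnone : Mm none = 1 := by
    rw [hMm, Finsupp.add_apply, Finsupp.single_eq_same, hνTnone]
  have hMk₀ : Mm (some k₀) = 0 := by
    rw [hMm, Finsupp.add_apply, Finsupp.single_eq_of_ne (by simp), hνTk₀]
  have hM1 : ∀ v, Mm v ≤ 1 := by
    intro v
    rw [hMm, Finsupp.add_apply]
    cases v with
    | none => rw [Finsupp.single_eq_same, hνTnone]
    | some k =>
      rw [Finsupp.single_eq_of_ne (by simp), zero_add]
      exact hνT1 _
  -- every positive-degree homogeneous invariant has vanishing pure-y coefficients
  have hKL : ∀ g ∈ invO 𝔽 n (d' + 1), (∃ i, 0 < i ∧ MvPolynomial.IsHomogeneous g i) →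
      ∀ m : Option (Fin (d' + 1)) →₀ ℕ, m ≤ Mm → m none = 0 →
        MvPolynomial.coeff m (Φ g) = 0 := by
    have hZ : ∀ g ∈ invO 𝔽 n (d' + 1), ∃ c : 𝔽,
        ∀ m : Option (Fin (d' + 1)) →₀ ℕ, m ≤ Mm → m none = 0 →
          MvPolynomial.coeff m (Φ g - MvPolynomial.C c) = 0 := by
      intro g hg
      refine Algebra.adjoin_induction ?_ ?_ ?_ ?_ hg
      · rintro x ⟨t, ht1, htn, w, hw, hform, rfl⟩
        refine ⟨0, fun m hm h0 => ?_⟩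
        rw [map_zero, sub_zero]
        exact MTIAux.genInZ hp0 hpn k₀ Q Mm hMk₀ hM1 ht1 htn w hw hform m hm h0
      · intro r
        refine ⟨r, fun m hm h0 => ?_⟩
        have hc : Φ ((algebraMap 𝔽 (Rpoly 𝔽 n (d' + 1))) r) = MvPolynomial.C r :=
          Φ.commutes r
        rw [hc, sub_self, MvPolynomial.coeff_zero]
      · rintro x y hx hy ⟨c1, h1⟩ ⟨c2, h2⟩
        refine ⟨c1 + c2, fun m hm h0 => ?_⟩
        have he : Φ (x + y) - MvPolynomial.C (c1 + c2)
            = (Φ x - MvPolynomial.C c1) + (Φ y - MvPolynomial.C c2) := by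
          rw [map_add, map_add]; ring
        rw [he, MvPolynomial.coeff_add, h1 m hm h0, h2 m hm h0, add_zero]
      · rintro x y hx hy ⟨c1, h1⟩ ⟨c2, h2⟩
        refine ⟨c1 * c2, fun m hm h0 => ?_⟩
        have he : Φ (x * y) - MvPolynomial.C (c1 * c2)
            = (Φ x - MvPolynomial.C c1) * (Φ y - MvPolynomial.C c2)
              + MvPolynomial.C c1 * (Φ y - MvPolynomial.C c2)
              + MvPolynomial.C c2 * (Φ x - MvPolynomial.C c1) := by
          rw [_root_.map_mul, _root_.map_mul]; ring
        rw [he, MvPolynomial.coeff_add, MvPolynomial.coeff_add]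
        have hmul : MvPolynomial.coeff m
            ((Φ x - MvPolynomial.C c1) * (Φ y - MvPolynomial.C c2)) = 0 := by
          rw [MvPolynomial.coeff_mul]
          refine Finset.sum_eq_zero ?_
          rintro ⟨m1, m2⟩ hmem
          rw [Finset.HasAntidiagonal.mem_antidiagonal] at hmem
          have hm1 : m1 ≤ Mm := le_trans (hmem ▸ le_self_add) hm
          have h1n : m1 none = 0 := by
            have hx1 : m1 none + m2 none = m none := by
              rw [← Finsupp.add_apply, hmem]
            omega
          rw [h1 m1 hm1 h1n, zero_mul]
        rw [hmul, MvPolynomial.coeff_C_mul, MvPolynomial.coeff_C_mul,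
          h2 m hm h0, h1 m hm h0]
        ring
    rintro g hg ⟨i, hipos, hgi⟩ m hm h0
    obtain ⟨c, hc⟩ := hZ g hg
    have hc0 := hc 0 zero_le rfl
    rw [MvPolynomial.coeff_sub, MTIAux.constCoeff_aeval k₀ Q g hipos hgi,
      MvPolynomial.coeff_zero_C, zero_sub, neg_eq_zero] at hc0
    have hfin := hc m hm h0
    rw [MvPolynomial.coeff_sub, hc0, map_zero, MvPolynomial.coeff_zero, sub_zero] at hfin
    exact hfin
  -- decomposability forces the coefficient to vanish
  unfold Decomposable at hdec
  have hzero : MvPolynomial.coeff Mm (Φ (Matrix.trace (List.ofFn (fun i : Fin (d' + 1) =>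
      if δ i then (Xgen 𝔽 n (d' + 1) (σ i))ᵀ else Xgen 𝔽 n (d' + 1) (σ i))).prod)) = 0 := by
    refine Submodule.span_induction ?_ ?_ ?_ ?_ hdec
    · rintro x ⟨g, hg, h, hh, hgi, hhj, rfl⟩
      rw [_root_.map_mul, MvPolynomial.coeff_mul]
      refine Finset.sum_eq_zero ?_
      rintro ⟨m1, m2⟩ hmem
      rw [Finset.HasAntidiagonal.mem_antidiagonal] at hmem
      have hsum : m1 none + m2 none = 1 := by
        rw [← Finsupp.add_apply, hmem, hMnone]
      by_cases h1 : m1 none = 0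
      · rw [hKL g hg hgi m1 (le_trans (hmem ▸ le_self_add) le_rfl) h1, zero_mul]
      · have h2 : m2 none = 0 := by omega
        rw [hKL h hh hhj m2 (le_trans (hmem ▸ le_add_self) le_rfl) h2, mul_zero]
    · simp
    · intro x y _ _ hx hy
      rw [map_add, MvPolynomial.coeff_add, hx, hy, add_zero]
    · intro a x _ hx
      rw [_root_.map_smul, MvPolynomial.coeff_smul, hx, smul_zero]
  -- but the explicit value of that coefficient is 1
  have hval := MTIAux.mainValue (𝔽 := 𝔽) hp0 hpn σ δ cT hcT aI b0 rfl rfl E0 hE0 Q hQ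
  rw [← hk₀] at hval
  rw [← hΦ, ← hνT, ← hMm] at hval
  exact one_ne_zero (hval.symm.trans hzero)

end
end

section
/- Let 𝔽 be an infinite field of characteristic p with 0 < p ≤ n and p ≠ 2, and let d ≥ 1. Then every set S of homogeneous elements that generates R^{O(n)} as an 𝔽-algebra contains an element of degree at least d. In particular, the maximal degree D(R^{O(n)}) of elements in a minimal homogeneous system of generators of R^{O(n)} tends to infinity as d tends to infinity. -/
open Matrix
noncomputable section

namespace InvOAux

open MvPolynomial Matrix

variable {𝔽 : Type} [Field 𝔽] {n d : ℕ}

/-- 0/1 diagonal weights of the evaluation matrices. -/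
def aw (p n d : ℕ) (k : Fin d) (i : Fin n) : ℕ :=
  if (k : ℕ) = d - 1 then (if (i : ℕ) = 0 then 1 else 0)
  else (if (i : ℕ) < p then 1 else 0)

lemma aw01 (p : ℕ) (k : Fin d) (i : Fin n) : aw p n d k i = 1 ∨ aw p n d k i = 0 := by
  unfold aw; split_ifs <;> simp

/-- The evaluation homomorphism `x_{ij}(k) ↦ c_k · (A_k)_{ij}`. -/
def Φm (𝔽 : Type) [Field 𝔽] (p n d : ℕ) :
    Rpoly 𝔽 n d →ₐ[𝔽] MvPolynomial (Fin d) 𝔽 :=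
  aeval (fun q : Fin n × Fin n × Fin d =>
    X q.2.2 * C (if q.1 = q.2.1 then ((aw p n d q.2.2 q.1 : ℕ) : 𝔽) else 0))

lemma map_Xgen (p : ℕ) (k : Fin d) :
    (Xgen 𝔽 n d k).map (Φm 𝔽 p n d) =
      diagonal (fun i => X k * C ((aw p n d k i : ℕ) : 𝔽)) := by
  ext i j
  by_cases h : i = j
  · subst h; simp [Xgen, Matrix.map_apply, Φm, diagonal_apply_eq]
  · simp [Xgen, Matrix.map_apply, Φm, diagonal_apply_ne _ h, h]

lemma map_XgenT (p : ℕ) (k : Fin d) :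
    ((Xgen 𝔽 n d k)ᵀ).map (Φm 𝔽 p n d) =
      diagonal (fun i => X k * C ((aw p n d k i : ℕ) : 𝔽)) := by
  ext i j
  by_cases h : i = j
  · subst h; simp [Xgen, Matrix.map_apply, Φm, diagonal_apply_eq, Matrix.transpose_apply]
  · have h' : j ≠ i := fun hji => h hji.symm
    simp [Xgen, Matrix.map_apply, Φm, diagonal_apply_ne _ h, Matrix.transpose_apply, h']

/-- multidegree of a word -/
def μw (ks : List (Fin d)) : Fin d →₀ ℕ :=
  (ks.map (fun k => Finsupp.single k 1)).sum

/-- diagonal 0/1 entry of a word -/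
def bw (p n d : ℕ) (ks : List (Fin d)) (i : Fin n) : ℕ :=
  (ks.map (fun k => aw p n d k i)).prod

lemma μw_nil : μw ([] : List (Fin d)) = 0 := rfl

lemma μw_cons (k : Fin d) (ks : List (Fin d)) :
    μw (k :: ks) = Finsupp.single k 1 + μw ks := by
  simp [μw]

lemma bw01 (p : ℕ) (ks : List (Fin d)) (i : Fin n) :
    bw p n d ks i = 1 ∨ bw p n d ks i = 0 := by
  induction ks with
  | nil => left; rfl
  | cons k ks ih =>
    have h1 := aw01 (n := n) (d := d) p k i
    have : bw p n d (k :: ks) i = aw p n d k i * bw p n d ks i := by simp [bw]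
    rw [this]
    rcases h1 with h1 | h1 <;> rcases ih with h2 | h2 <;> simp [h1, h2]

lemma one_le_μw {ks : List (Fin d)} {k : Fin d} (h : k ∈ ks) : 1 ≤ μw ks k := by
  induction ks with
  | nil => simp at h
  | cons k' ks ih =>
    rw [μw_cons, Finsupp.add_apply]
    rcases List.mem_cons.mp h with h | h
    · subst h; simp [Finsupp.single_apply]
    · exact le_add_left (ih h)

lemma μw_sum (ks : List (Fin d)) : (μw ks).sum (fun _ e => e) = ks.length := by
  induction ks with
  | nil => simp [μw]
  | cons k ks ih =>
    rw [μw_cons, Finsupp.sum_add_index (by simp) (by simp)]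
    simp [Finsupp.sum_single_index, ih, Nat.add_comm]

/-- entries of the image of a word: product over the list -/
lemma entry_prod (p : ℕ) (ks : List (Fin d)) (i : Fin n) :
    ((ks.map (fun k => (X k : MvPolynomial (Fin d) 𝔽) * C ((aw p n d k i : ℕ) : 𝔽))).prod)
      = monomial (μw ks) ((bw p n d ks i : ℕ) : 𝔽) := by
  induction ks with
  | nil => simp [μw, bw, monomial_zero']
  | cons k ks ih =>
    have hX : (X k : MvPolynomial (Fin d) 𝔽) = monomial (Finsupp.single k 1) 1 := rfl
    have hC : (C ((aw p n d k i : ℕ) : 𝔽) : MvPolynomial (Fin d) 𝔽)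
        = monomial 0 ((aw p n d k i : ℕ) : 𝔽) := rfl
    calc ((k :: ks).map
          (fun k => (X k : MvPolynomial (Fin d) 𝔽) * C ((aw p n d k i : ℕ) : 𝔽))).prod
        = (X k * C ((aw p n d k i : ℕ) : 𝔽)) *
          ((ks.map (fun k => (X k : MvPolynomial (Fin d) 𝔽)
            * C ((aw p n d k i : ℕ) : 𝔽))).prod) := by simp
      _ = monomial (μw (k :: ks)) ((bw p n d (k :: ks) i : ℕ) : 𝔽) := by
          rw [ih, hX, hC, monomial_mul, monomial_mul, μw_cons]
          have : bw p n d (k :: ks) i = aw p n d k i * bw p n d ks i := by simp [bw]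
          rw [this]
          push_cast
          ring_nf
          simp [add_zero]


/-- the word relation -/
def WRel (𝔽 : Type) [Field 𝔽] (n d : ℕ)
    (M : Matrix (Fin n) (Fin n) (Rpoly 𝔽 n d)) (k : Fin d) : Prop :=
  M = Xgen 𝔽 n d k ∨ M = (Xgen 𝔽 n d k)ᵀ

lemma exists_ks (w : List (Matrix (Fin n) (Fin n) (Rpoly 𝔽 n d)))
    (hw : ∀ M ∈ w, (∃ k, M = Xgen 𝔽 n d k) ∨ (∃ k, M = (Xgen 𝔽 n d k)ᵀ)) :
    ∃ ks : List (Fin d), List.Forall₂ (WRel 𝔽 n d) w ks := by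
  induction w with
  | nil => exact ⟨[], List.Forall₂.nil⟩
  | cons M w ih =>
    obtain ⟨ks, hks⟩ := ih (fun M hM => hw M (List.mem_cons_of_mem _ hM))
    rcases hw M (List.mem_cons_self) with ⟨k, hk⟩ | ⟨k, hk⟩
    · exact ⟨k :: ks, List.Forall₂.cons (Or.inl hk) hks⟩
    · exact ⟨k :: ks, List.Forall₂.cons (Or.inr hk) hks⟩

lemma map_word_prod (p : ℕ) {w : List (Matrix (Fin n) (Fin n) (Rpoly 𝔽 n d))}
    {ks : List (Fin d)} (h : List.Forall₂ (WRel 𝔽 n d) w ks) :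
    (w.prod).map (Φm 𝔽 p n d) =
      diagonal (fun i => monomial (μw ks) ((bw p n d ks i : ℕ) : 𝔽)) := by
  induction h with
  | nil =>
    simp only [List.prod_nil]
    rw [Matrix.map_one _ (map_zero _) (map_one _)]
    have hfun : (fun i : Fin n =>
        (MvPolynomial.monomial (μw ([] : List (Fin d)))) ((bw p n d [] i : ℕ) : 𝔽))
        = fun _ => (1 : MvPolynomial (Fin d) 𝔽) := by
      funext i
      have h1 : μw ([] : List (Fin d)) = 0 := rfl
      have h2 : bw p n d ([] : List (Fin d)) i = 1 := rfl
      rw [h1, h2, Nat.cast_one, monomial_zero', C_1]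
    rw [hfun, diagonal_one]
  | @cons M k w ks hMk htail ih =>
    have hmul : ((M :: w).prod).map (Φm 𝔽 p n d) = (M.map (Φm 𝔽 p n d)) * ((w.prod).map (Φm 𝔽 p n d)) := by
      rw [List.prod_cons]
      exact _root_.map_mul ((Φm 𝔽 p n d).toRingHom.mapMatrix) M w.prod
    rw [hmul, ih]
    have hM : M.map (Φm 𝔽 p n d) = diagonal (fun i => X k * C ((aw p n d k i : ℕ) : 𝔽)) := by
      rcases hMk with hM | hM <;> subst hM
      · exact map_Xgen p k
      · exact map_XgenT p k
    rw [hM, diagonal_mul_diagonal]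
    have hfun : (fun i : Fin n => (X k * C ((aw p n d k i : ℕ) : 𝔽))
          * (monomial (μw ks)) ((bw p n d ks i : ℕ) : 𝔽))
        = fun i : Fin n => (monomial (μw (k :: ks))) ((bw p n d (k :: ks) i : ℕ) : 𝔽) := by
      funext i
      rw [← entry_prod (𝔽 := 𝔽) p (k :: ks) i, List.map_cons, List.prod_cons,
        entry_prod (𝔽 := 𝔽) p ks i]
    rw [hfun]

lemma charmatrix_diagonal (v : Fin n → MvPolynomial (Fin d) 𝔽) :
    charmatrix (diagonal v) = diagonal (fun i => Polynomial.X - Polynomial.C (v i)) := by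
  apply Matrix.ext
  intro i j
  by_cases hij : i = j
  · subst hij
    simp [charmatrix_apply_eq]
  · simp [charmatrix_apply_ne _ _ _ hij, diagonal_apply_ne _ hij]

lemma charpoly_diagonal (v : Fin n → MvPolynomial (Fin d) 𝔽) :
    (diagonal v).charpoly = ∏ i, (Polynomial.X - Polynomial.C (v i)) := by
  rw [Matrix.charpoly, charmatrix_diagonal, det_diagonal]

/-- the "rank" of a word -/
def zw (p n d : ℕ) (ks : List (Fin d)) : ℕ :=
  (Finset.univ.filter (fun i : Fin n => bw p n d ks i = 1)).card

lemma zw_le (p : ℕ) (ks : List (Fin d)) : zw p n d ks ≤ n := by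
  classical
  calc zw p n d ks ≤ (Finset.univ : Finset (Fin n)).card := Finset.card_filter_le _ _
    _ = n := by simp

/-- main computation: image of `σ_t` of a word -/
lemma phi_sigma (p : ℕ) {w : List (Matrix (Fin n) (Fin n) (Rpoly 𝔽 n d))}
    {ks : List (Fin d)} (h : List.Forall₂ (WRel 𝔽 n d) w ks) {t : ℕ} (htn : t ≤ n) :
    Φm 𝔽 p n d (sigmaCoeff t w.prod) =
      if t ≤ zw p n d ks then
        C (((zw p n d ks).choose t : ℕ) : 𝔽) * monomial (t • μw ks) (1 : 𝔽)
      else 0 := by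
  classical
  set z := zw p n d ks with hz
  set u : MvPolynomial (Fin d) 𝔽 := monomial (μw ks) 1 with hu
  have hzn : z ≤ n := by rw [hz]; exact zw_le p ks
  have hzc : (Finset.univ.filter (fun i : Fin n => bw p n d ks i = 1)).card = z := by
    rw [hz]; rfl
  -- charpoly of the image
  have himg := map_word_prod p h
  have hcp : ((w.prod).charpoly.map (Φm 𝔽 p n d).toRingHom)
      = ∏ i, (Polynomial.X - Polynomial.C (monomial (μw ks) ((bw p n d ks i : ℕ) : 𝔽))) := by
    have himg' : w.prod.map ⇑(Φm 𝔽 p n d).toRingHom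
        = diagonal (fun i => monomial (μw ks) ((bw p n d ks i : ℕ) : 𝔽)) := himg
    rw [← Matrix.charpoly_map, himg', charpoly_diagonal]
  have hsplit : (∏ i, (Polynomial.X
        - Polynomial.C (monomial (μw ks) ((bw p n d ks i : ℕ) : 𝔽))))
      = (Polynomial.X - Polynomial.C u) ^ z * Polynomial.X ^ (n - z) := by
    have hrw : ∀ i : Fin n,
        (Polynomial.X - Polynomial.C (monomial (μw ks) ((bw p n d ks i : ℕ) : 𝔽)))
        = if bw p n d ks i = 1 then (Polynomial.X - Polynomial.C u) else Polynomial.X := by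
      intro i
      rcases bw01 p ks i with hb | hb <;> rw [hb] <;> simp [hu]
    have hcard : (Finset.univ.filter (fun i : Fin n => bw p n d ks i = 1)).card
        + (Finset.univ.filter (fun i : Fin n => ¬ bw p n d ks i = 1)).card = n := by
      rw [Finset.card_filter_add_card_filter_not]
      simp
    rw [Finset.prod_congr rfl (fun i _ => hrw i), Finset.prod_ite, Finset.prod_const,
      Finset.prod_const, hzc]
    congr 2
    omega
  -- coefficient extraction
  have hcoeff : ((Polynomial.X - Polynomial.C u) ^ z * Polynomial.X ^ (n - z)).coeff (n - t)
      = if t ≤ z then ((z.choose t : ℕ) : MvPolynomial (Fin d) 𝔽) * (-u) ^ t else 0 := by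
    rw [Polynomial.coeff_mul_X_pow']
    by_cases hle : t ≤ z
    · have h1 : n - z ≤ n - t := by omega
      have h2 : n - t - (n - z) = z - t := by omega
      rw [if_pos h1, h2]
      have : (Polynomial.X - Polynomial.C u) = (Polynomial.X + Polynomial.C (-u)) := by
        rw [map_neg, sub_eq_add_neg]
      rw [this, Polynomial.coeff_X_add_C_pow]
      rw [if_pos hle]
      have h3 : z - (z - t) = t := by omega
      rw [h3, Nat.choose_symm hle]
      ring
    · have h1 : ¬ (n - z ≤ n - t) := by omega
      rw [if_neg h1, if_neg hle]
  -- assemble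
  have hΦ : Φm 𝔽 p n d (sigmaCoeff t w.prod)
      = (-1) ^ t * (((w.prod).charpoly.map (Φm 𝔽 p n d).toRingHom).coeff (n - t)) := by
    rw [sigmaCoeff, _root_.map_mul, _root_.map_pow, _root_.map_neg, _root_.map_one,
      Polynomial.coeff_map]
    rfl
  rw [hΦ, hcp, hsplit, hcoeff]
  by_cases hle : t ≤ z
  · rw [if_pos hle, if_pos hle]
    have hneg : (-u) ^ t = (-1) ^ t * u ^ t := by
      rw [neg_eq_neg_one_mul, mul_pow]
    have hut : u ^ t = monomial (t • μw ks) (1 : 𝔽) := by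
      rw [hu, monomial_pow, one_pow]
    have hcast : ((z.choose t : ℕ) : MvPolynomial (Fin d) 𝔽)
        = C (((z.choose t : ℕ) : 𝔽)) := by
      rw [map_natCast (C : 𝔽 →+* MvPolynomial (Fin d) 𝔽)]
    have hsq : ((-1 : MvPolynomial (Fin d) 𝔽)) ^ t * (-1 : MvPolynomial (Fin d) 𝔽) ^ t
        = 1 := by
      rw [← mul_pow]; norm_num
    rw [hneg, show ((-1 : MvPolynomial (Fin d) 𝔽)) ^ t
        * (((z.choose t : ℕ) : MvPolynomial (Fin d) 𝔽) * ((-1) ^ t * u ^ t))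
        = ((-1 : MvPolynomial (Fin d) 𝔽) ^ t * (-1 : MvPolynomial (Fin d) 𝔽) ^ t)
          * (((z.choose t : ℕ) : MvPolynomial (Fin d) 𝔽) * u ^ t) from by ring,
      hsq, one_mul, hcast, hut]
  · rw [if_neg hle, if_neg hle, mul_zero]


lemma bw_of_no_last (p : ℕ) {ks : List (Fin d)} (hne : ks ≠ [])
    (hnol : ∀ k ∈ ks, (k : ℕ) ≠ d - 1) (i : Fin n) :
    bw p n d ks i = if (i : ℕ) < p then 1 else 0 := by
  induction ks with
  | nil => exact absurd rfl hne
  | cons k ks ih =>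
    have hk : (k : ℕ) ≠ d - 1 := hnol k List.mem_cons_self
    have hak : aw p n d k i = if (i : ℕ) < p then 1 else 0 := by
      unfold aw; rw [if_neg hk]
    have hcons : bw p n d (k :: ks) i = aw p n d k i * bw p n d ks i := by simp [bw]
    by_cases hks : ks = []
    · subst hks
      rw [hcons, hak]
      simp [bw]
    · have := ih hks (fun k' hk' => hnol k' (List.mem_cons_of_mem _ hk'))
      rw [hcons, hak, this]
      split_ifs <;> simp

lemma zw_of_no_last (p : ℕ) (hpn : p ≤ n) {ks : List (Fin d)} (hne : ks ≠ [])
    (hnol : ∀ k ∈ ks, (k : ℕ) ≠ d - 1) : zw p n d ks = p := by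
  classical
  have hfil : (Finset.univ.filter (fun i : Fin n => bw p n d ks i = 1))
      = (Finset.univ.filter (fun i : Fin n => (i : ℕ) < p)) := by
    apply Finset.filter_congr
    intro i _
    rw [bw_of_no_last p hne hnol i]
    split_ifs with h <;> simp [h]
  have e : {i : Fin n // (i : ℕ) < p} ≃ Fin p :=
    { toFun := fun x => ⟨(x.1 : ℕ), x.2⟩
      invFun := fun j => ⟨⟨(j : ℕ), lt_of_lt_of_le j.2 hpn⟩, j.2⟩
      left_inv := fun x => by ext; rfl
      right_inv := fun j => by ext; rfl }
  rw [zw, hfil, ← Fintype.card_subtype, Fintype.card_congr e]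
  exact Fintype.card_fin p

/-- the full word: all indices -/
lemma bw_finRange (p : ℕ) (hp0 : 0 < p) (hd : 1 ≤ d) (i : Fin n) :
    bw p n d (List.finRange d) i = if (i : ℕ) = 0 then 1 else 0 := by
  by_cases hi : (i : ℕ) = 0
  · rw [if_pos hi]
    apply List.prod_eq_one
    intro x hx
    rw [List.mem_map] at hx
    obtain ⟨k, _, rfl⟩ := hx
    unfold aw
    rw [hi]
    split_ifs <;> omega
  · rw [if_neg hi]
    apply List.prod_eq_zero
    rw [List.mem_map]
    refine ⟨⟨d - 1, by omega⟩, List.mem_finRange _, ?_⟩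
    unfold aw
    rw [if_pos rfl, if_neg hi]

lemma zw_finRange (p : ℕ) (hp0 : 0 < p) (hd : 1 ≤ d) (hn : 0 < n) :
    zw p n d (List.finRange d) = 1 := by
  classical
  have hfil : (Finset.univ.filter (fun i : Fin n => bw p n d (List.finRange d) i = 1))
      = {(⟨0, hn⟩ : Fin n)} := by
    ext i
    rw [Finset.mem_filter, bw_finRange p hp0 hd i, Finset.mem_singleton]
    constructor
    · rintro ⟨-, h⟩
      by_cases h0 : (i : ℕ) = 0
      · exact Fin.ext h0
      · rw [if_neg h0] at h
        exact absurd h (by omega)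
    · rintro rfl
      refine ⟨Finset.mem_univ _, ?_⟩
      rw [if_pos rfl]
  rw [zw, hfil, Finset.card_singleton]

lemma μw_not_mem {ks : List (Fin d)} {k : Fin d} (h : k ∉ ks) : μw ks k = 0 := by
  induction ks with
  | nil => rfl
  | cons k' ks ih =>
    rw [μw_cons, Finsupp.add_apply]
    have hk' : k' ≠ k := fun he => h (he ▸ (List.mem_cons_self : k' ∈ k' :: ks))
    rw [Finsupp.single_apply, if_neg hk', ih (fun hm => h (List.mem_cons_of_mem _ hm))]

lemma μw_nodup_mem {ks : List (Fin d)} {k : Fin d} (hnd : ks.Nodup) (h : k ∈ ks) :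
    μw ks k = 1 := by
  induction ks with
  | nil => simp at h
  | cons k' ks ih =>
    rw [μw_cons, Finsupp.add_apply, Finsupp.single_apply]
    rcases List.mem_cons.mp h with rfl | hm
    · rw [if_pos rfl, μw_not_mem (List.nodup_cons.mp hnd).1]
    · have hk' : k' ≠ k := by
        rintro rfl; exact (List.nodup_cons.mp hnd).1 hm
      rw [if_neg hk', ih (List.nodup_cons.mp hnd).2 hm]

lemma μw_finRange_apply (k : Fin d) : μw (List.finRange d) k = 1 :=
  μw_nodup_mem (List.nodup_finRange d) (List.mem_finRange k)


/-- Lemma A: coefficients of images of invO elements vanish at 0/1 exponents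
avoiding the last index. -/
lemma coeff_phi_invO {p : ℕ} (hp0 : 0 < p) (hpn : p ≤ n) (hchar : ((p : ℕ) : 𝔽) = 0)
    {x : Rpoly 𝔽 n d} (hx : x ∈ invO 𝔽 n d) :
    ∀ v : Fin d →₀ ℕ, v ≠ 0 → (∀ k, v k ≤ 1) → (∀ k : Fin d, (k : ℕ) = d - 1 → v k = 0) →
      MvPolynomial.coeff v (Φm 𝔽 p n d x) = 0 := by
  classical
  induction hx using Algebra.adjoin_induction with
  | mem f hf =>
    obtain ⟨t, ht1, htn, w, hwne, hwmem, rfl⟩ := hf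
    intro v hv0 hv1 hvlast
    obtain ⟨ks, hks⟩ := exists_ks w hwmem
    rw [phi_sigma p hks htn]
    split_ifs with hle
    · rw [MvPolynomial.coeff_C_mul, MvPolynomial.coeff_monomial]
      by_cases he : t • μw ks = v
      · rw [if_pos he]
        -- derive t = 1 and no-last
        have hksne : ks ≠ [] := by
          intro h0
          subst h0
          cases hks
          exact hwne rfl
        obtain ⟨k0, hk0⟩ := List.exists_mem_of_ne_nil ks hksne
        have h1 : 1 ≤ μw ks k0 := one_le_μw hk0
        have h3 : v k0 ≤ 1 := hv1 k0
        have h5 : v k0 = t * μw ks k0 := by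
          rw [← he, Finsupp.smul_apply, smul_eq_mul]
        have h6 : t ≤ t * μw ks k0 := Nat.le_mul_of_pos_right t (by omega)
        have ht1' : t = 1 := by omega
        subst ht1'
        rw [one_smul] at he
        subst he
        have hnol : ∀ k ∈ ks, (k : ℕ) ≠ d - 1 := by
          intro k hk hkl
          have := hvlast k hkl
          have := one_le_μw hk
          omega
        rw [zw_of_no_last p hpn hksne hnol, Nat.choose_one_right, hchar, mul_one]
      · rw [if_neg he, mul_zero]
    · simp
  | algebraMap r =>
    intro v hv0 _ _
    rw [AlgHom.commutes]
    have : (algebraMap 𝔽 (MvPolynomial (Fin d) 𝔽)) r = MvPolynomial.C r := rfl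
    rw [this, MvPolynomial.coeff_C, if_neg (fun h => hv0 h.symm)]
  | add x y hx hy ihx ihy =>
    intro v hv0 hv1 hvl
    rw [map_add, MvPolynomial.coeff_add, ihx v hv0 hv1 hvl, ihy v hv0 hv1 hvl, add_zero]
  | mul x y hx hy ihx ihy =>
    intro v hv0 hv1 hvl
    rw [_root_.map_mul, MvPolynomial.coeff_mul]
    apply Finset.sum_eq_zero
    rintro ⟨v1, v2⟩ hmem
    rw [Finset.HasAntidiagonal.mem_antidiagonal] at hmem
    by_cases h1 : v1 = 0
    · have h2 : v2 = v := by rw [← hmem, h1, zero_add]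
      rw [h2, ihy v hv0 hv1 hvl, mul_zero]
    · have hle1 : ∀ k, v1 k ≤ 1 := by
        intro k
        have : v1 k + v2 k = v k := by rw [← Finsupp.add_apply, hmem]
        have := hv1 k
        omega
      have hl1 : ∀ k : Fin d, (k : ℕ) = d - 1 → v1 k = 0 := by
        intro k hk
        have : v1 k + v2 k = v k := by rw [← Finsupp.add_apply, hmem]
        have := hvl k hk
        omega
      rw [ihx v1 h1 hle1 hl1]
      ring

/-- degree bound for the evaluation -/
lemma totalDegree_phi_le (p : ℕ) (f : Rpoly 𝔽 n d) :
    (Φm 𝔽 p n d f).totalDegree ≤ f.totalDegree := by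
  classical
  set g : Fin n × Fin n × Fin d → MvPolynomial (Fin d) 𝔽 :=
    fun q => X q.2.2 * C (if q.1 = q.2.1 then ((aw p n d q.2.2 q.1 : ℕ) : 𝔽) else 0) with hg
  have hg1 : ∀ q, (g q).totalDegree ≤ 1 := by
    intro q
    apply le_trans (MvPolynomial.totalDegree_mul _ _)
    rw [MvPolynomial.totalDegree_X, MvPolynomial.totalDegree_C]
  have hΦ : Φm 𝔽 p n d f = MvPolynomial.aeval g f := rfl
  rw [hΦ]
  conv_lhs => rw [← MvPolynomial.support_sum_monomial_coeff f]
  rw [map_sum]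
  apply le_trans (MvPolynomial.totalDegree_finset_sum _ _)
  apply Finset.sup_le
  intro u hu
  rw [MvPolynomial.aeval_monomial]
  apply le_trans (MvPolynomial.totalDegree_mul _ _)
  have h1 : ((algebraMap 𝔽 (MvPolynomial (Fin d) 𝔽)) (MvPolynomial.coeff u f)).totalDegree
      = 0 := MvPolynomial.totalDegree_C _
  rw [h1, zero_add, Finsupp.prod]
  apply le_trans (MvPolynomial.totalDegree_finset_prod _ _)
  have h2 : ∀ q ∈ u.support, ((g q) ^ u q).totalDegree ≤ u q := by
    intro q _
    apply le_trans (MvPolynomial.totalDegree_pow _ _)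
    calc u q * (g q).totalDegree ≤ u q * 1 := Nat.mul_le_mul_left _ (hg1 q)
      _ = u q := Nat.mul_one _
  apply le_trans (Finset.sum_le_sum h2)
  exact MvPolynomial.le_totalDegree hu

/-- Main induction: the coefficient at the all-ones exponent of the image of any
element of the adjoin of a low-degree set vanishes. -/
lemma coeff_phi_adjoin {p : ℕ} (hd : 1 ≤ d) (hp0 : 0 < p) (hpn : p ≤ n)
    (hchar : ((p : ℕ) : 𝔽) = 0) (S : Set (Rpoly 𝔽 n d))
    (hdeg : ∀ f ∈ S, f.totalDegree < d)
    (hgen : Algebra.adjoin 𝔽 S = invO 𝔽 n d)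
    {x : Rpoly 𝔽 n d} (hx : x ∈ Algebra.adjoin 𝔽 S) :
    MvPolynomial.coeff (μw (List.finRange d)) (Φm 𝔽 p n d x) = 0 := by
  classical
  set V : Fin d →₀ ℕ := μw (List.finRange d) with hV
  have hVapp : ∀ k, V k = 1 := fun k => μw_finRange_apply k
  have hVne : V ≠ 0 := by
    intro h0
    have := hVapp ⟨0, by omega⟩
    rw [h0] at this
    simp at this
  induction hx using Algebra.adjoin_induction with
  | mem s hs =>
    by_contra hne
    have hsup : V ∈ (Φm 𝔽 p n d s).support := MvPolynomial.mem_support_iff.mpr hne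
    have h1 : V.sum (fun _ e => e) ≤ (Φm 𝔽 p n d s).totalDegree :=
      MvPolynomial.le_totalDegree hsup
    have h2 : (Φm 𝔽 p n d s).totalDegree ≤ s.totalDegree := totalDegree_phi_le p s
    have h3 : V.sum (fun _ e => e) = d := by
      rw [hV, μw_sum, List.length_finRange]
    have h4 := hdeg s hs
    omega
  | algebraMap r =>
    rw [AlgHom.commutes]
    have : (algebraMap 𝔽 (MvPolynomial (Fin d) 𝔽)) r = MvPolynomial.C r := rfl
    rw [this, MvPolynomial.coeff_C, if_neg (fun h => hVne h.symm)]
  | add x y hx hy ihx ihy =>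
    rw [map_add, MvPolynomial.coeff_add, ihx, ihy, add_zero]
  | mul x y hx hy ihx ihy =>
    rw [_root_.map_mul, MvPolynomial.coeff_mul]
    apply Finset.sum_eq_zero
    rintro ⟨v1, v2⟩ hmem
    rw [Finset.HasAntidiagonal.mem_antidiagonal] at hmem
    by_cases h1 : v1 = 0
    · have h2 : v2 = V := by rw [← hmem, h1, zero_add]
      rw [h2, ihy, mul_zero]
    · by_cases h2 : v2 = 0
      · have h3 : v1 = V := by rw [← hmem, h2, add_zero]
        rw [h3, ihx, zero_mul]
      · have hadd : ∀ k, v1 k + v2 k = V k := by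
          intro k
          rw [← Finsupp.add_apply, hmem]
        set kl : Fin d := ⟨d - 1, by omega⟩ with hkl
        have hsum : v1 kl + v2 kl = 1 := by rw [hadd kl, hVapp]
        have hxO : x ∈ invO 𝔽 n d := hgen ▸ hx
        have hyO : y ∈ invO 𝔽 n d := hgen ▸ hy
        by_cases hc : v1 kl = 0
        · have := coeff_phi_invO hp0 hpn hchar hxO v1 h1
            (fun k => by have := hadd k; have := hVapp k; omega)
            (fun k hk => by
              have hkk : k = kl := Fin.ext (by simp [hk, hkl])
              rw [hkk]; exact hc)
          rw [this, zero_mul]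
        · have hc2 : v2 kl = 0 := by omega
          have := coeff_phi_invO hp0 hpn hchar hyO v2 h2
            (fun k => by have := hadd k; have := hVapp k; omega)
            (fun k hk => by
              have hkk : k = kl := Fin.ext (by simp [hk, hkl])
              rw [hkk]; exact hc2)
          rw [this, mul_zero]

lemma forall₂_map_self (l : List (Fin d)) :
    List.Forall₂ (WRel 𝔽 n d) (l.map (Xgen 𝔽 n d)) l := by
  induction l with
  | nil => exact List.Forall₂.nil
  | cons k l ih => exact List.Forall₂.cons (Or.inl rfl) ih

end InvOAux

theorem invO_generating_set_degree_ge
    (𝔽 : Type) [Field 𝔽] [Infinite 𝔽] (n d : ℕ) (hn : 2 ≤ n) (hd : 1 ≤ d)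
    (hp0 : 0 < ringChar 𝔽) (hpn : ringChar 𝔽 ≤ n) (hp2 : ringChar 𝔽 ≠ 2)
    (S : Set (Rpoly 𝔽 n d)) (hhom : ∀ f ∈ S, ∃ k, MvPolynomial.IsHomogeneous f k)
    (hgen : Algebra.adjoin 𝔽 S = invO 𝔽 n d) :
    ∃ f ∈ S, d ≤ f.totalDegree := by
  classical
  by_contra hcon
  push_neg at hcon
  set p : ℕ := ringChar 𝔽 with hp
  haveI : CharP 𝔽 p := ringChar.charP 𝔽
  have hchar : ((p : ℕ) : 𝔽) = 0 := CharP.cast_eq_zero 𝔽 p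
  have hdeg : ∀ f ∈ S, f.totalDegree < d := fun f hf => by
    have := hcon f hf
    omega
  -- the witness invariant tr(X_1 ⋯ X_d)
  set w : List (Matrix (Fin n) (Fin n) (Rpoly 𝔽 n d)) :=
    (List.finRange d).map (Xgen 𝔽 n d) with hw
  set F : Rpoly 𝔽 n d := sigmaCoeff 1 w.prod with hF
  have hlen : w.length = d := by rw [hw, List.length_map, List.length_finRange]
  have hwne : w ≠ [] := by
    intro h
    rw [h] at hlen
    simp at hlen
    omega
  have hmemgen : F ∈ invO 𝔽 n d := by
    apply Algebra.subset_adjoin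
    refine ⟨1, le_refl 1, by omega, w, hwne, ?_, rfl⟩
    intro M hM
    obtain ⟨k, _, rfl⟩ := List.mem_map.mp hM
    exact Or.inl ⟨k, rfl⟩
  have hzero : MvPolynomial.coeff (InvOAux.μw (List.finRange d))
      (InvOAux.Φm 𝔽 p n d F) = 0 :=
    InvOAux.coeff_phi_adjoin hd hp0 hpn hchar S hdeg hgen (hgen ▸ hmemgen)
  have hval : MvPolynomial.coeff (InvOAux.μw (List.finRange d))
      (InvOAux.Φm 𝔽 p n d F) = 1 := by
    rw [hF, InvOAux.phi_sigma p (InvOAux.forall₂_map_self (List.finRange d)) (by omega),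
      if_pos (by rw [InvOAux.zw_finRange p hp0 hd (by omega)]),
      InvOAux.zw_finRange p hp0 hd (by omega)]
    rw [MvPolynomial.coeff_C_mul, one_smul, MvPolynomial.coeff_monomial, if_pos rfl]
    simp
  rw [hzero] at hval
  exact zero_ne_one hval

end
end

section
/- Let 𝔽 be an infinite field of characteristic p ≠ 2 and d ≥ 1. If tr(X₁⁺ X₂⁺ ⋯ X_d⁺) is decomposable in R₊^{O(n)} (i.e., lies in the 𝔽-span of products g·h with g, h ∈ R₊^{O(n)} homogeneous of positive degree), then tr((X₁ + X₁ᵀ)(X₂ + X₂ᵀ) ⋯ (X_d + X_dᵀ)) is decomposable in R^{O(n)} (i.e., lies in the 𝔽-span of products g·h with g, h ∈ R^{O(n)} homogeneous of positive degree). -/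
open Matrix
noncomputable section

namespace AmitsurKey

open Polynomial

variable {S : Type*} [CommRing S] {n : ℕ}

/-- general σ_t -/
def sig (n t : ℕ) {S : Type*} [CommRing S] (A : Matrix (Fin n) (Fin n) S) : S :=
  (-1) ^ t * A.charpoly.coeff (n - t)

/-- polynomials whose coefficients up to degree N lie in the subring C -/
def CPN (C : Subring S) (N : ℕ) : Subring (Polynomial S) where
  carrier := {p | ∀ j, j ≤ N → p.coeff j ∈ C}
  zero_mem' := by intro j hj; rw [Polynomial.coeff_zero]; exact C.zero_mem
  one_mem' := by
    intro j hj
    rw [Polynomial.coeff_one]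
    split
    · exact C.one_mem
    · exact C.zero_mem
  add_mem' := by
    intro p q hp hq j hj
    rw [Polynomial.coeff_add]; exact C.add_mem (hp j hj) (hq j hj)
  neg_mem' := by
    intro p hp j hj
    rw [Polynomial.coeff_neg]; exact C.neg_mem (hp j hj)
  mul_mem' := by
    intro p q hp hq j hj
    rw [Polynomial.coeff_mul]
    refine Subring.sum_mem _ fun c hc => ?_
    have hc' := Finset.HasAntidiagonal.mem_antidiagonal.mp hc
    exact C.mul_mem (hp c.1 (by omega)) (hq c.2 (by omega))

lemma mem_CPN {C : Subring S} {N : ℕ} {p : S[X]} :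
    p ∈ CPN C N ↔ ∀ j, j ≤ N → p.coeff j ∈ C := Iff.rfl

lemma coeff_eq_zero_of_mem_span {N j : ℕ} {p : S[X]}
    (hp : p ∈ Ideal.span {(X : S[X]) ^ (N + 1)}) (hj : j ≤ N) : p.coeff j = 0 := by
  rw [Ideal.mem_span_singleton] at hp
  obtain ⟨e, rfl⟩ := hp
  rw [X_pow_mul, Polynomial.coeff_mul_X_pow', if_neg (by omega)]

lemma add_span_mem_CPN {C : Subring S} {N : ℕ} {p q : S[X]} (hp : p ∈ CPN C N)
    (hq : q ∈ Ideal.span {(X : S[X]) ^ (N + 1)}) : p + q ∈ CPN C N := by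
  intro j hj
  rw [Polynomial.coeff_add, coeff_eq_zero_of_mem_span hq hj, add_zero]
  exact hp j hj

lemma det_congr_mod {I : Ideal S} {m : ℕ} {A B : Matrix (Fin m) (Fin m) S}
    (h : ∀ i j, A i j - B i j ∈ I) : A.det - B.det ∈ I := by
  rw [← Ideal.Quotient.eq, RingHom.map_det, RingHom.map_det]
  congr 1
  exact Matrix.ext fun i j => Ideal.Quotient.eq.mpr (h i j)

/-- the matrix `x^m • D` over `S[x]` attached to a weighted letter -/
def letterM (p : ℕ × Matrix (Fin n) (Fin n) S) : Matrix (Fin n) (Fin n) S[X] :=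
  (X : S[X]) ^ p.1 • p.2.map Polynomial.C

def TL (L : List (ℕ × Matrix (Fin n) (Fin n) S)) : Matrix (Fin n) (Fin n) S[X] :=
  (L.map letterM).sum

@[simp] lemma TL_nil : TL ([] : List (ℕ × Matrix (Fin n) (Fin n) S)) = 0 := rfl

@[simp] lemma TL_cons (p : ℕ × Matrix (Fin n) (Fin n) S) (L) :
    TL (p :: L) = letterM p + TL L := by simp [TL]

lemma TL_append (L L' : List (ℕ × Matrix (Fin n) (Fin n) S)) :
    TL (L ++ L') = TL L + TL L' := by simp [TL]

lemma TL_flatMap (l : List ℕ) (g : ℕ → List (ℕ × Matrix (Fin n) (Fin n) S)) :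
    TL (l.flatMap g) = (l.map fun k => TL (g k)).sum := by
  induction l with
  | nil => simp
  | cons x l ih => rw [List.flatMap_cons, TL_append, List.map_cons, List.sum_cons, ih]

lemma TL_entry_mem {N : ℕ} (L : List (ℕ × Matrix (Fin n) (Fin n) S))
    (h : ∀ p ∈ L, N + 1 ≤ p.1) (i j : Fin n) :
    TL L i j ∈ Ideal.span {(X : S[X]) ^ (N + 1)} := by
  induction L with
  | nil => simp
  | cons p L ih =>
    rw [TL_cons, Matrix.add_apply]
    refine Ideal.add_mem _ ?_ (ih fun q hq => h q (List.mem_cons_of_mem _ hq))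
    have hp := h p (List.mem_cons_self)
    simp only [letterM, Matrix.smul_apply, Matrix.map_apply, smul_eq_mul]
    exact Ideal.mem_span_singleton.mpr
      (dvd_mul_of_dvd_left (pow_dvd_pow _ hp) _)

lemma det_one_sub_TL_mem_of_high (C : Subring S) (N : ℕ)
    (L : List (ℕ × Matrix (Fin n) (Fin n) S)) (h : ∀ p ∈ L, N + 1 ≤ p.1) :
    (1 - TL L).det ∈ CPN C N := by
  have h2 : (1 - TL L).det - (1 : Matrix (Fin n) (Fin n) S[X]).det ∈
      Ideal.span {(X : S[X]) ^ (N + 1)} := by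
    refine det_congr_mod fun i j => ?_
    have : (1 - TL L) i j - (1 : Matrix (Fin n) (Fin n) S[X]) i j = -(TL L i j) := by
      simp [Matrix.sub_apply]
    rw [this]
    exact neg_mem (TL_entry_mem L h i j)
  rw [Matrix.det_one] at h2
  have h3 : (1 - TL L).det = 1 + ((1 - TL L).det - 1) := by ring
  rw [h3]
  exact add_span_mem_CPN (Subring.one_mem _) h2


lemma neg_one_pow_mem (C : Subring S) (t : ℕ) : ((-1 : S)) ^ t ∈ C :=
  C.pow_mem (C.neg_mem C.one_mem) t

lemma neg_one_pow_mul_neg_one_pow (t : ℕ) : ((-1 : S)) ^ t * (-1) ^ t = 1 := by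
  rw [← pow_add, ← two_mul, pow_mul]
  norm_num

lemma charpolyRev_coeff_mem [Nontrivial S] (C : Subring S) (M : Matrix (Fin n) (Fin n) S)
    (h : ∀ t, 1 ≤ t → sig n t M ∈ C) (j : ℕ) : M.charpolyRev.coeff j ∈ C := by
  have hdeg : M.charpoly.natDegree = n := by
    rw [Matrix.charpoly_natDegree_eq_dim, Fintype.card_fin]
  rw [← Matrix.reverse_charpoly, Polynomial.coeff_reverse, hdeg]
  by_cases hj : j ≤ n
  · rw [Polynomial.revAt_le hj]
    rcases Nat.eq_zero_or_pos j with rfl | hj1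
    · have h1 := M.charpoly_monic.coeff_natDegree
      rw [hdeg] at h1
      rw [Nat.sub_zero, h1]
      exact C.one_mem
    · have hs := h j hj1
      have hcc : M.charpoly.coeff (n - j) = (-1 : S) ^ j * sig n j M := by
        rw [sig, ← mul_assoc, neg_one_pow_mul_neg_one_pow, one_mul]
      rw [hcc]
      exact C.mul_mem (neg_one_pow_mem C j) hs
  · rw [Polynomial.revAt_eq_self_of_lt (by omega)]
    rw [Polynomial.coeff_eq_zero_of_natDegree_lt (by omega)]
    exact C.zero_mem

lemma coeff_eval₂_X_pow_mem {C : Subring S} {q : S[X]} (hq : ∀ i, q.coeff i ∈ C) (m j : ℕ) :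
    (Polynomial.eval₂ Polynomial.C ((X : S[X]) ^ m) q).coeff j ∈ C := by
  rw [Polynomial.eval₂_eq_sum, Polynomial.sum_def, Polynomial.finset_sum_coeff]
  refine Subring.sum_mem _ fun i _ => ?_
  rw [← pow_mul, Polynomial.coeff_C_mul, Polynomial.coeff_X_pow]
  rcases eq_or_ne j (m * i) with rfl | hne
  · rw [if_pos rfl, mul_one]; exact hq i
  · rw [if_neg hne, mul_zero]; exact C.zero_mem

/-- key single-letter lemma -/
lemma det_one_sub_pow_smul_mem [Nontrivial S] (C : Subring S) (N : ℕ)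
    (D : Matrix (Fin n) (Fin n) S) (h : ∀ t, 1 ≤ t → sig n t D ∈ C) (m : ℕ) :
    (1 - (X : S[X]) ^ m • D.map Polynomial.C).det ∈ CPN C N := by
  set ψ : S[X] →+* S[X] := Polynomial.eval₂RingHom Polynomial.C ((X : S[X]) ^ m) with hψ
  have hmap : (1 - (X : S[X]) • D.map Polynomial.C).map (fun q => ψ q)
      = 1 - (X : S[X]) ^ m • D.map Polynomial.C := by
    refine Matrix.ext fun i j => ?_
    simp only [Matrix.map_apply, Matrix.sub_apply, Matrix.smul_apply, Matrix.one_apply,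
      smul_eq_mul, hψ, Polynomial.coe_eval₂RingHom]
    rw [Polynomial.eval₂_sub, Polynomial.eval₂_mul, Polynomial.eval₂_X, Polynomial.eval₂_C]
    congr 1
    split <;> simp
  have hdet : (1 - (X : S[X]) ^ m • D.map Polynomial.C).det = ψ D.charpolyRev := by
    rw [Matrix.charpolyRev, RingHom.map_det, ← hmap]
    rfl
  intro j hj
  rw [hdet]
  exact coeff_eval₂_X_pow_mem (charpolyRev_coeff_mem C D h) m j

lemma pow_smul_map (m k : ℕ) (D : Matrix (Fin n) (Fin n) S) :
    ((X : S[X]) ^ m • D.map Polynomial.C) ^ k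
      = (X : S[X]) ^ (m * k) • (D ^ k).map Polynomial.C := by
  rw [_root_.smul_pow, ← pow_mul]
  congr 1
  simpa only [RingHom.mapMatrix_apply] using
    (map_pow (RingHom.mapMatrix (Polynomial.C : S →+* S[X])) D k).symm

lemma map_mul_matrix (A B : Matrix (Fin n) (Fin n) S) :
    (A * B).map (Polynomial.C : S → S[X]) = A.map Polynomial.C * B.map Polynomial.C := by
  simpa only [RingHom.mapMatrix_apply] using
    (map_mul (RingHom.mapMatrix (Polynomial.C : S →+* S[X])) A B)

lemma TL_map_shift (m₁ : ℕ) (D₁ : Matrix (Fin n) (Fin n) S) (k : ℕ)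
    (L : List (ℕ × Matrix (Fin n) (Fin n) S)) :
    TL (L.map fun p => (p.1 + k * m₁, D₁ ^ k * p.2))
      = ((X : S[X]) ^ m₁ • D₁.map Polynomial.C) ^ k * TL L := by
  induction L with
  | nil => simp
  | cons p L ih =>
    rw [List.map_cons, TL_cons, TL_cons, mul_add, ih]
    congr 1
    rw [pow_smul_map, letterM, letterM]
    dsimp only
    have harith : m₁ * k + p.1 = p.1 + k * m₁ := by ring
    rw [map_mul_matrix, smul_mul_smul_comm, ← pow_add, harith]

lemma list_range_map_sum {M : Type*} [AddCommMonoid M] (N : ℕ) (f : ℕ → M) :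
    ((List.range N).map f).sum = ∑ k ∈ Finset.range N, f k := by
  induction N with
  | zero => simp
  | succ N ih =>
    rw [List.range_succ, List.map_append, List.sum_append, Finset.sum_range_succ, ih]
    simp


lemma key [Nontrivial S] (C : Subring S) (W : Set (Matrix (Fin n) (Fin n) S))
    (hWmul : ∀ a ∈ W, ∀ b ∈ W, a * b ∈ W)
    (hsig : ∀ D ∈ W, ∀ t, 1 ≤ t → sig n t D ∈ C) (N : ℕ) :
    ∀ (a b : ℕ) (L : List (ℕ × Matrix (Fin n) (Fin n) S)),
      (∀ p ∈ L, 1 ≤ p.1 ∧ p.2 ∈ W) →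
      (∀ p ∈ L, p.1 ≤ N → N + 1 - p.1 ≤ a) →
      L.countP (fun p => decide (p.1 ≤ N ∧ N + 1 - p.1 = a)) ≤ b →
      (1 - TL L).det ∈ CPN C N := by
  intro a
  induction a with
  | zero =>
    intro b L hW hlev _
    refine det_one_sub_TL_mem_of_high C N L fun p hp => ?_
    by_contra hc
    have h1 := hlev p hp (by omega)
    omega
  | succ a iha =>
    intro b
    induction b with
    | zero =>
      intro L hW hlev hcount
      refine iha L.length L hW (fun p hp hpN => ?_) (List.countP_le_length)
      have h0 := List.countP_eq_zero.mp (Nat.le_zero.mp hcount) p hp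
      simp only [decide_eq_true_eq] at h0
      have h1 := hlev p hp hpN
      omega
    | succ b ihb =>
      intro L hW hlev hcount
      by_cases hc : L.countP (fun p => decide (p.1 ≤ N ∧ N + 1 - p.1 = a + 1)) ≤ b
      · exact ihb L hW hlev hc
      have hpos : 0 < L.countP (fun p => decide (p.1 ≤ N ∧ N + 1 - p.1 = a + 1)) := by omega
      obtain ⟨l, hmemL, hpredl⟩ := List.countP_pos_iff.mp hpos
      simp only [decide_eq_true_eq] at hpredl
      obtain ⟨s, t, rfl⟩ := List.append_of_mem hmemL
      set m₁ := l.1 with hm₁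
      set D₁ := l.2 with hD₁
      have hlW := hW l hmemL
      set L₂ := s ++ t with hL₂
      have hperm : (s ++ l :: t).Perm (l :: L₂) := List.perm_middle
      have hL₂mem : ∀ q ∈ L₂, q ∈ s ++ l :: t := by
        intro q hq
        exact hperm.symm.subset (List.mem_cons_of_mem l hq)
      have hTL : TL (s ++ l :: t) = letterM l + TL L₂ := by
        unfold TL
        rw [(hperm.map letterM).sum_eq, List.map_cons, List.sum_cons]
      set A := letterM l with hA
      set T' := TL L₂ with hT'
      set V := ∑ k ∈ Finset.range (N + 1), A ^ k with hV
      set extra := (List.range N).flatMap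
        (fun k => L₂.map fun p => (p.1 + (k + 1) * m₁, D₁ ^ (k + 1) * p.2)) with hextra
      set newL := L₂ ++ extra with hnewL
      -- claim 1 : V * T' = TL newL
      have claim1 : V * T' = TL newL := by
        rw [hnewL, TL_append, hextra, TL_flatMap]
        have hsh : ∀ k : ℕ, TL (L₂.map fun p => (p.1 + (k + 1) * m₁, D₁ ^ (k + 1) * p.2))
            = A ^ (k + 1) * T' := fun k => TL_map_shift m₁ D₁ (k + 1) L₂
        simp only [hsh]
        rw [list_range_map_sum, hV, Finset.sum_mul, Finset.sum_range_succ']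
        rw [pow_zero, one_mul, add_comm]
      -- geometric identity
      have hcommAV : Commute A V :=
        Commute.sum_right _ _ _ fun i _ => (Commute.refl A).pow_right i
      have hgeom : (1 - A) * V = 1 - A ^ (N + 1) := by
        have h3 := geom_sum_mul A (N + 1)
        have h2 : V * (1 - A) = 1 - A ^ (N + 1) := by
          have : V * (1 - A) = -(V * (A - 1)) := by
            rw [mul_sub, mul_sub, mul_one, neg_sub]
          rw [this, hV, h3, neg_sub]
        calc (1 - A) * V = V * (1 - A) := (((Commute.one_left V).sub_left hcommAV)).eq
          _ = 1 - A ^ (N + 1) := h2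
      -- main algebraic identity
      have hid : 1 - TL (s ++ l :: t) = (1 - A) * (1 - V * T') - A ^ (N + 1) * T' := by
        rw [hTL]
        have : (1 - A) * (1 - V * T') = (1 - A) - ((1 - A) * V) * T' := by
          rw [mul_sub, mul_one, mul_assoc]
        rw [this, hgeom, sub_mul, one_mul]
        abel
      -- the error term is in the ideal
      have hApow : A ^ (N + 1) = (X : S[X]) ^ (m₁ * (N + 1)) • (D₁ ^ (N + 1)).map Polynomial.C := by
        rw [hA, letterM, ← hm₁, ← hD₁]
        exact pow_smul_map m₁ (N + 1) D₁
      have herr : ∀ i j, (A ^ (N + 1) * T') i j ∈ Ideal.span {(X : S[X]) ^ (N + 1)} := by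
        intro i j
        rw [Matrix.mul_apply]
        refine Ideal.sum_mem _ fun k _ => ?_
        rw [hApow]
        simp only [Matrix.smul_apply, Matrix.map_apply, smul_eq_mul]
        refine Ideal.mem_span_singleton.mpr ?_
        have hdvd : (X : S[X]) ^ (N + 1) ∣ (X : S[X]) ^ (m₁ * (N + 1)) :=
          pow_dvd_pow _ (Nat.le_mul_of_pos_left _ (by omega : 0 < m₁))
        exact (hdvd.mul_right _).mul_right _
      -- congruence step
      have hsub : ((1 - A) * (1 - V * T') - A ^ (N + 1) * T').det
          - ((1 - A) * (1 - V * T')).det ∈ Ideal.span {(X : S[X]) ^ (N + 1)} := by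
        refine det_congr_mod fun i j => ?_
        have : ((1 - A) * (1 - V * T') - A ^ (N + 1) * T') i j
            - ((1 - A) * (1 - V * T')) i j = -((A ^ (N + 1) * T') i j) := by
          simp [Matrix.sub_apply]
        rw [this]
        exact neg_mem (herr i j)
      -- hypotheses for newL
      have hWnew : ∀ p ∈ newL, 1 ≤ p.1 ∧ p.2 ∈ W := by
        intro p hp
        rcases List.mem_append.mp hp with hp | hp
        · exact hW p (hL₂mem p hp)
        · rw [hextra] at hp
          obtain ⟨k, hk, hp⟩ := List.mem_flatMap.mp hp
          obtain ⟨q, hq, rfl⟩ := List.mem_map.mp hp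
          have hqL := hW q (hL₂mem q hq)
          constructor
          · dsimp only; omega
          · dsimp only
            have hpow : ∀ j : ℕ, D₁ ^ (j + 1) * q.2 ∈ W := by
              intro j
              induction j with
              | zero => simpa [pow_one] using hWmul D₁ hlW.2 q.2 hqL.2
              | succ j ihj =>
                have : D₁ ^ (j + 1 + 1) * q.2 = D₁ * (D₁ ^ (j + 1) * q.2) := by
                  rw [← mul_assoc, ← pow_succ']
                rw [this]
                exact hWmul D₁ hlW.2 _ ihj
            exact hpow k
      have hlevnew : ∀ p ∈ newL, p.1 ≤ N → N + 1 - p.1 ≤ a + 1 := by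
        intro p hp hpN
        rcases List.mem_append.mp hp with hp | hp
        · exact hlev p (hL₂mem p hp) hpN
        · rw [hextra] at hp
          obtain ⟨k, hk, hp⟩ := List.mem_flatMap.mp hp
          obtain ⟨q, hq, rfl⟩ := List.mem_map.mp hp
          dsimp only at hpN ⊢
          have hq1 : q.1 ≤ N := by
            have := (hW q (hL₂mem q hq)).1
            have := hlW.1
            omega
          have := hlev q (hL₂mem q hq) hq1
          have := hlW.1
          have hmul1 : m₁ ≤ (k + 1) * m₁ := Nat.le_mul_of_pos_left _ (Nat.succ_pos k)
          omega
      have hcountnew : newL.countP (fun p => decide (p.1 ≤ N ∧ N + 1 - p.1 = a + 1)) ≤ b := by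
        have hext0 : extra.countP (fun p => decide (p.1 ≤ N ∧ N + 1 - p.1 = a + 1)) = 0 := by
          refine List.countP_eq_zero.mpr fun p hp => ?_
          rw [hextra] at hp
          obtain ⟨k, hk, hp⟩ := List.mem_flatMap.mp hp
          obtain ⟨q, hq, rfl⟩ := List.mem_map.mp hp
          simp only [decide_eq_true_eq, not_and]
          intro hpN
          have hq1 : q.1 ≤ N := by
            have := (hW q (hL₂mem q hq)).1
            have := hlW.1
            omega
          have := hlev q (hL₂mem q hq) hq1
          have := hlW.1
          have hmul1 : m₁ ≤ (k + 1) * m₁ := Nat.le_mul_of_pos_left _ (Nat.succ_pos k)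
          omega
        have hsplit : (s ++ l :: t).countP (fun p => decide (p.1 ≤ N ∧ N + 1 - p.1 = a + 1))
            = L₂.countP (fun p => decide (p.1 ≤ N ∧ N + 1 - p.1 = a + 1)) + 1 := by
          rw [hperm.countP_eq, List.countP_cons_of_pos]
          simp only [decide_eq_true_eq]
          exact hpredl
        rw [hnewL, List.countP_append, hext0, add_zero]
        omega
      -- assemble
      have hmemA : (1 - A).det ∈ CPN C N := by
        rw [hA, letterM]
        exact det_one_sub_pow_smul_mem C N D₁ (hsig D₁ hlW.2) l.1
      have hmemNew : (1 - TL newL).det ∈ CPN C N := ihb newL hWnew hlevnew hcountnew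
      have hfinal : (1 - TL (s ++ l :: t)).det
          = (1 - A).det * (1 - TL newL).det
            + (((1 - A) * (1 - V * T') - A ^ (N + 1) * T').det
              - ((1 - A) * (1 - V * T')).det) := by
        rw [← hid, ← claim1, Matrix.det_mul]
        ring
      rw [hfinal]
      exact add_span_mem_CPN (Subring.mul_mem _ hmemA hmemNew) hsub


lemma sig_list_sum_mem [Nontrivial S] (C : Subring S) (W : Set (Matrix (Fin n) (Fin n) S))
    (hWmul : ∀ a ∈ W, ∀ b ∈ W, a * b ∈ W)
    (hsig : ∀ D ∈ W, ∀ t, 1 ≤ t → sig n t D ∈ C)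
    (l : List (Matrix (Fin n) (Fin n) S)) (hl : ∀ D ∈ l, D ∈ W)
    (t : ℕ) (ht : 1 ≤ t) : sig n t l.sum ∈ C := by
  have hkey := key C W hWmul hsig t t (l.map fun D => ((1 : ℕ), D)).length
      (l.map fun D => ((1 : ℕ), D))
      (by
        intro p hp
        obtain ⟨D, hD, rfl⟩ := List.mem_map.mp hp
        exact ⟨le_refl 1, hl D hD⟩)
      (by
        intro p hp _
        obtain ⟨D, hD, rfl⟩ := List.mem_map.mp hp
        omega)
      (List.countP_le_length)
  have hTLsum : TL (l.map fun D => ((1 : ℕ), D)) = (X : S[X]) • (l.sum).map Polynomial.C := by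
    have h1 : TL (l.map fun D => ((1 : ℕ), D))
        = (l.map fun D => (X : S[X]) • D.map Polynomial.C).sum := by
      unfold TL
      rw [List.map_map]
      congr 1
      refine List.map_congr_left fun D _ => ?_
      simp [letterM]
    have h2 : (l.sum).map (Polynomial.C : S → S[X])
        = (l.map fun D => D.map (Polynomial.C : S → S[X])).sum := by
      exact
        map_list_sum (RingHom.mapMatrix (Polynomial.C : S →+* S[X])) l
    rw [h1, h2, List.smul_sum, List.map_map]
    rfl
  rw [hTLsum] at hkey
  have hrev : (l.sum).charpolyRev ∈ CPN C t := hkey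
  have hdeg : (l.sum : Matrix (Fin n) (Fin n) S).charpoly.natDegree = n := by
    rw [Matrix.charpoly_natDegree_eq_dim, Fintype.card_fin]
  by_cases htn : t ≤ n
  · have hcoef := hrev t (le_refl t)
    rw [← Matrix.reverse_charpoly, Polynomial.coeff_reverse, hdeg,
      Polynomial.revAt_le htn] at hcoef
    exact C.mul_mem (neg_one_pow_mem C t) hcoef
  · push_neg at htn
    have hcoef := hrev n (by omega)
    rw [← Matrix.reverse_charpoly, Polynomial.coeff_reverse, hdeg,
      Polynomial.revAt_le (le_refl n), Nat.sub_self] at hcoef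
    have h0 : n - t = 0 := by omega
    rw [sig, h0]
    exact C.mul_mem (neg_one_pow_mem C t) hcoef

end AmitsurKey

namespace DecompGlue

variable (𝔽 : Type) [Field 𝔽] (n d : ℕ)

def phiHom : Rpoly 𝔽 n d →ₐ[𝔽] Rpoly 𝔽 n d :=
  MvPolynomial.aeval fun v => MvPolynomial.X v + MvPolynomial.X (v.2.1, v.1, v.2.2)

lemma phi_map_XgenSym (k : Fin d) :
    (XgenSym 𝔽 n d k).map (phiHom 𝔽 n d) = Xgen 𝔽 n d k + (Xgen 𝔽 n d k)ᵀ := by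
  refine Matrix.ext fun i j => ?_
  simp only [Matrix.map_apply, Matrix.add_apply, Matrix.transpose_apply, XgenSym, Xgen]
  by_cases h : j ≤ i
  · rw [if_pos h]
    simp [phiHom, MvPolynomial.aeval_X]
  · rw [if_neg h]
    simp [phiHom, MvPolynomial.aeval_X, add_comm]

lemma phi_sigmaCoeff (t : ℕ) (A : Matrix (Fin n) (Fin n) (Rpoly 𝔽 n d)) :
    phiHom 𝔽 n d (sigmaCoeff t A) = sigmaCoeff t (A.map (phiHom 𝔽 n d)) := by
  unfold sigmaCoeff
  rw [_root_.map_mul, map_pow, map_neg, _root_.map_one]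
  congr 1
  have hch : (A.map (phiHom 𝔽 n d)).charpoly
      = A.charpoly.map (phiHom 𝔽 n d).toRingHom := by
    exact Matrix.charpoly_map A (phiHom 𝔽 n d).toRingHom
  rw [hch, Polynomial.coeff_map]
  rfl

def Wrd : Set (Matrix (Fin n) (Fin n) (Rpoly 𝔽 n d)) :=
  {M | ∃ w : List (Matrix (Fin n) (Fin n) (Rpoly 𝔽 n d)), w ≠ [] ∧
    (∀ m ∈ w, (∃ k, m = Xgen 𝔽 n d k) ∨ (∃ k, m = (Xgen 𝔽 n d k)ᵀ)) ∧ M = w.prod}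

lemma Wrd_mul : ∀ a ∈ Wrd 𝔽 n d, ∀ b ∈ Wrd 𝔽 n d, a * b ∈ Wrd 𝔽 n d := by
  rintro a ⟨w1, h1, hm1, rfl⟩ b ⟨w2, h2, hm2, rfl⟩
  refine ⟨w1 ++ w2, fun h => h1 (List.append_eq_nil_iff.mp h).1, ?_, (List.prod_append).symm⟩
  intro m hm
  rcases List.mem_append.mp hm with h | h
  exacts [hm1 m h, hm2 m h]

lemma sig_Wrd_mem (hn1 : 1 ≤ n) :
    ∀ D ∈ Wrd 𝔽 n d, ∀ t, 1 ≤ t → AmitsurKey.sig n t D ∈ (invO 𝔽 n d).toSubring := by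
  rintro D ⟨w, hw, hmw, rfl⟩ t ht
  rw [Subalgebra.mem_toSubring]
  by_cases htn : t ≤ n
  · exact Algebra.subset_adjoin ⟨t, ht, htn, w, hw, hmw, rfl⟩
  · push_neg at htn
    have h1 : sigmaCoeff n w.prod ∈ invO 𝔽 n d :=
      Algebra.subset_adjoin ⟨n, hn1, le_refl n, w, hw, hmw, rfl⟩
    have hc : (w.prod.charpoly.coeff 0)
        = (-1 : Rpoly 𝔽 n d) ^ n * sigmaCoeff n w.prod := by
      rw [sigmaCoeff, Nat.sub_self, ← mul_assoc, AmitsurKey.neg_one_pow_mul_neg_one_pow,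
        one_mul]
    have h0 : n - t = 0 := by omega
    show (-1 : Rpoly 𝔽 n d) ^ t * w.prod.charpoly.coeff (n - t) ∈ invO 𝔽 n d
    rw [h0, hc]
    exact mul_mem (pow_mem (neg_mem (one_mem _)) t)
      (mul_mem (pow_mem (neg_mem (one_mem _)) n) h1)

def AddW : Set (Matrix (Fin n) (Fin n) (Rpoly 𝔽 n d)) :=
  {M | ∃ l : List (Matrix (Fin n) (Fin n) (Rpoly 𝔽 n d)),
    (∀ D ∈ l, D ∈ Wrd 𝔽 n d) ∧ M = l.sum}

lemma mul_list_sum' {R : Type*} [NonUnitalNonAssocSemiring R] (a : R) (l : List R) :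
    a * l.sum = (l.map (a * ·)).sum := by
  induction l with
  | nil => simp
  | cons b l ih => simp [mul_add, ih]

lemma AddW_mul_aux (l l' : List (Matrix (Fin n) (Fin n) (Rpoly 𝔽 n d)))
    (hl : ∀ D ∈ l, D ∈ Wrd 𝔽 n d) (hl' : ∀ D ∈ l', D ∈ Wrd 𝔽 n d) :
    l.sum * l'.sum ∈ AddW 𝔽 n d := by
  induction l with
  | nil => exact ⟨[], by simp, by simp⟩
  | cons x l ih =>
    rw [List.sum_cons, add_mul]
    have h1 : x * l'.sum ∈ AddW 𝔽 n d := by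
      refine ⟨l'.map (x * ·), ?_, (mul_list_sum' x l')⟩
      intro D hD
      obtain ⟨D', hD', rfl⟩ := List.mem_map.mp hD
      exact Wrd_mul 𝔽 n d x (hl x (List.mem_cons_self)) D' (hl' D' hD')
    have h2 : l.sum * l'.sum ∈ AddW 𝔽 n d :=
      ih fun D hD => hl D (List.mem_cons_of_mem _ hD)
    obtain ⟨u, hu, hequ⟩ := h1
    obtain ⟨v, hv, heqv⟩ := h2
    refine ⟨u ++ v, ?_, by rw [List.sum_append, ← hequ, ← heqv]⟩
    intro D hD
    rcases List.mem_append.mp hD with h | h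
    exacts [hu D h, hv D h]

lemma AddW_mul : ∀ a ∈ AddW 𝔽 n d, ∀ b ∈ AddW 𝔽 n d, a * b ∈ AddW 𝔽 n d := by
  rintro a ⟨l, hl, rfl⟩ b ⟨l', hl', rfl⟩
  exact AddW_mul_aux 𝔽 n d l l' hl hl'

lemma AddW_prod (l : List (Matrix (Fin n) (Fin n) (Rpoly 𝔽 n d))) (hne : l ≠ [])
    (h : ∀ M ∈ l, M ∈ AddW 𝔽 n d) : l.prod ∈ AddW 𝔽 n d := by
  induction l with
  | nil => exact absurd rfl hne
  | cons x l ih =>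
    rw [List.prod_cons]
    rcases eq_or_ne l [] with rfl | hne'
    · simpa using h x (List.mem_cons_self)
    · exact AddW_mul 𝔽 n d x (h x (List.mem_cons_self)) l.prod
        (ih hne' fun M hM => h M (List.mem_cons_of_mem _ hM))

lemma sig_AddW_mem (hn1 : 1 ≤ n) :
    ∀ M ∈ AddW 𝔽 n d, ∀ t, 1 ≤ t → sigmaCoeff t M ∈ invO 𝔽 n d := by
  rintro M ⟨l, hl, rfl⟩ t ht
  have h := AmitsurKey.sig_list_sum_mem (invO 𝔽 n d).toSubring (Wrd 𝔽 n d)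
    (Wrd_mul 𝔽 n d) (sig_Wrd_mem 𝔽 n d hn1) l hl t ht
  exact Subalgebra.mem_toSubring.mp h

lemma XplusT_mem_AddW (k : Fin d) :
    Xgen 𝔽 n d k + (Xgen 𝔽 n d k)ᵀ ∈ AddW 𝔽 n d := by
  refine ⟨[Xgen 𝔽 n d k, (Xgen 𝔽 n d k)ᵀ], ?_, by simp⟩
  intro D hD
  rcases List.mem_cons.mp hD with rfl | hD
  · exact ⟨[Xgen 𝔽 n d k], List.cons_ne_nil _ _,
      fun m hm => by rw [List.mem_singleton.mp hm]; exact Or.inl ⟨k, rfl⟩,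
      (List.prod_singleton).symm⟩
  · rw [List.mem_singleton.mp hD]
    exact ⟨[(Xgen 𝔽 n d k)ᵀ], List.cons_ne_nil _ _,
      fun m hm => by rw [List.mem_singleton.mp hm]; exact Or.inr ⟨k, rfl⟩,
      (List.prod_singleton).symm⟩

lemma phi_invOplus_le (hn1 : 1 ≤ n) :
    Subalgebra.map (phiHom 𝔽 n d) (invOplus 𝔽 n d) ≤ invO 𝔽 n d := by
  have h1 : Subalgebra.map (phiHom 𝔽 n d) (invOplus 𝔽 n d)
      = Algebra.adjoin 𝔽 ((phiHom 𝔽 n d) ''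
        {f | ∃ t, 1 ≤ t ∧ t ≤ n ∧
          ∃ w : List (Matrix (Fin n) (Fin n) (Rpoly 𝔽 n d)), w ≠ [] ∧
            (∀ m ∈ w, ∃ k, m = XgenSym 𝔽 n d k) ∧
            f = sigmaCoeff t w.prod}) := by
    rw [invOplus]
    exact AlgHom.map_adjoin (phiHom 𝔽 n d) _
  rw [h1, Algebra.adjoin_le_iff]
  rintro x ⟨f, ⟨t, ht1, htn, w, hwne, hwmem, rfl⟩, rfl⟩
  show phiHom 𝔽 n d (sigmaCoeff t w.prod) ∈ invO 𝔽 n d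
  rw [phi_sigmaCoeff]
  have hmap : (w.prod).map (phiHom 𝔽 n d)
      = (w.map fun M => M.map (phiHom 𝔽 n d)).prod := by
    exact
      map_list_prod ((phiHom 𝔽 n d).toRingHom.mapMatrix) w
  rw [hmap]
  refine sig_AddW_mem 𝔽 n d hn1 _ ?_ t ht1
  refine AddW_prod 𝔽 n d _ (by simpa using hwne) ?_
  intro M hM
  obtain ⟨m, hm, rfl⟩ := List.mem_map.mp hM
  obtain ⟨k, rfl⟩ := hwmem m hm
  rw [phi_map_XgenSym]
  exact XplusT_mem_AddW 𝔽 n d k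

lemma phi_homog {g : Rpoly 𝔽 n d} {i : ℕ} (h : g.IsHomogeneous i) :
    (phiHom 𝔽 n d g).IsHomogeneous i := by
  have h2 := MvPolynomial.IsHomogeneous.aeval (S := 𝔽)
    (τ := Fin n × Fin n × Fin d) (n := 1) h
    (fun v => MvPolynomial.X v + MvPolynomial.X (v.2.1, v.1, v.2.2))
    (fun v => (MvPolynomial.isHomogeneous_X _ _).add (MvPolynomial.isHomogeneous_X _ _))
  simpa [one_mul, phiHom] using h2

lemma phi_trace (P : Matrix (Fin n) (Fin n) (Rpoly 𝔽 n d)) :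
    phiHom 𝔽 n d (Matrix.trace P) = Matrix.trace (P.map (phiHom 𝔽 n d)) := by
  simp [Matrix.trace, Matrix.diag, map_sum, Matrix.map_apply]

end DecompGlue

theorem decomposable_sym_imp_decomposable_sum
    (𝔽 : Type) [Field 𝔽] [Infinite 𝔽] (n d : ℕ) (hn : 2 ≤ n) (hd : 1 ≤ d)
    (hp2 : ringChar 𝔽 ≠ 2)
    (hdec : Decomposable 𝔽 (invOplus 𝔽 n d)
      (Matrix.trace (List.ofFn (fun k : Fin d => XgenSym 𝔽 n d k)).prod)) :
    Decomposable 𝔽 (invO 𝔽 n d)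
      (Matrix.trace (List.ofFn (fun k : Fin d =>
        Xgen 𝔽 n d k + (Xgen 𝔽 n d k)ᵀ)).prod) := by
  have hn1 : 1 ≤ n := by omega
  set φ := DecompGlue.phiHom 𝔽 n d with hφ
  have htr : φ (Matrix.trace (List.ofFn fun k : Fin d => XgenSym 𝔽 n d k).prod)
      = Matrix.trace (List.ofFn fun k : Fin d =>
          Xgen 𝔽 n d k + (Xgen 𝔽 n d k)ᵀ).prod := by
    rw [hφ, DecompGlue.phi_trace]
    congr 1
    have hmap : ((List.ofFn fun k : Fin d => XgenSym 𝔽 n d k).prod).map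
          (DecompGlue.phiHom 𝔽 n d)
        = ((List.ofFn fun k : Fin d => XgenSym 𝔽 n d k).map
            fun M => M.map (DecompGlue.phiHom 𝔽 n d)).prod := by
      exact
        map_list_prod ((DecompGlue.phiHom 𝔽 n d).toRingHom.mapMatrix)
          (List.ofFn fun k : Fin d => XgenSym 𝔽 n d k)
    rw [hmap, List.map_ofFn]
    exact congrArg List.prod (congrArg List.ofFn (funext fun k => DecompGlue.phi_map_XgenSym 𝔽 n d k))
  rw [← htr]
  unfold Decomposable at hdec ⊢
  have hmem := Submodule.mem_map_of_mem (f := φ.toLinearMap) hdec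
  rw [Submodule.map_span] at hmem
  refine Submodule.span_mono ?_ hmem
  rintro y ⟨x, ⟨g, hg, h, hh, ⟨i, hi0, hgi⟩, ⟨j, hj0, hhj⟩, rfl⟩, rfl⟩
  refine ⟨φ g, ?_, φ h, ?_, ⟨i, hi0, DecompGlue.phi_homog 𝔽 n d hgi⟩,
    ⟨j, hj0, DecompGlue.phi_homog 𝔽 n d hhj⟩, ?_⟩
  · exact DecompGlue.phi_invOplus_le 𝔽 n d hn1 ⟨g, hg, rfl⟩
  · exact DecompGlue.phi_invOplus_le 𝔽 n d hn1 ⟨h, hh, rfl⟩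
  · simp [AlgHom.toLinearMap_apply, _root_.map_mul]

end
end
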